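/- arXiv:1004.3157 — 4 statements merged into one kernel-verified Lean document; each statement's English description precedes it below -/
import Mathlib

section
/- The group A_4 × Z_2, with A_4 permuting the indices and Z_2 swapping them, acts by simplicial automorphisms on (S^2 × S^2)_16; under this action, the orbit of x_{11}x_{22}x_{33}x_{12}x_{13} has length 24, the orbit of x_{11}x_{22}x_{12}x_{14}x_{34} has length 24, the orbit of x_{11}x_{22}x_{14}x_{24}x_{34} has length 24, and the orbits of x_{11}x_{22}x_{21}x_{24}x_{31} and x_{11}x_{22}x_{24}x_{31}x_{34} each have length 12. -/
open Finset

section Generic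

variable {V : Type*}

/-- Faces of the simplicial complex generated by a set of facets. -/
def cFaces (X : Set (Finset V)) : Set (Finset V) :=
  {A | A.Nonempty ∧ ∃ F ∈ X, A ⊆ F}

/-- Number of faces of dimension `k`. -/
noncomputable def fVec (X : Set (Finset V)) (k : ℕ) : ℕ :=
  Set.ncard {A | A ∈ cFaces X ∧ A.card = k + 1}

/-- Faces of the link of a simplex. -/
def lkFaces [DecidableEq V] (X : Set (Finset V)) (σ : Finset V) : Set (Finset V) :=
  {τ | τ.Nonempty ∧ Disjoint τ σ ∧ τ ∪ σ ∈ cFaces X}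

/-- Degree of a simplex: number of vertices of its link. -/
noncomputable def degS [DecidableEq V] (X : Set (Finset V)) (σ : Finset V) : ℕ :=
  Set.ncard {v : V | v ∉ σ ∧ insert v σ ∈ cFaces X}

def TwoNeighbourly [DecidableEq V] (X : Set (Finset V)) : Prop :=
  ∀ u v : V, {u} ∈ cFaces X → {v} ∈ cFaces X → u ≠ v → ({u, v} : Finset V) ∈ cFaces X

/-- Geometric realization of the complex with facet set `X`. -/
def realization [Fintype V] (X : Set (Finset V)) : Set (V → ℝ) :=
  {f | (∀ v, 0 ≤ f v) ∧ (∑ v, f v) = 1 ∧ ∃ F ∈ X, ∀ v, f v ≠ 0 → v ∈ F}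

/-- `X` triangulates the `d`-sphere. -/
def TriangulatesSphere [Fintype V] (X : Set (Finset V)) (d : ℕ) : Prop :=
  Nonempty ((realization X) ≃ₜ (Metric.sphere (0 : EuclideanSpace ℝ (Fin (d + 1))) 1))

/-- The edge graph of a simplicial complex. -/
def cGraph [DecidableEq V] (X : Set (Finset V)) : SimpleGraph V where
  Adj u v := u ≠ v ∧ ({u, v} : Finset V) ∈ cFaces X
  symm := by
    constructor
    intro u v h
    exact ⟨h.1.symm, by rw [Finset.pair_comm]; exact h.2⟩
  loopless := ⟨fun v h => h.1 rfl⟩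

/-- The subgroup of all vertex permutations which fix `S` pointwise and
map faces to faces. -/
def autRel [DecidableEq V] (X : Set (Finset V)) (S : Set V) : Subgroup (Equiv.Perm V) where
  carrier := {π | (∀ v ∈ S, π v = v) ∧ ∀ F : Finset V, F ∈ X ↔ F.image π ∈ X}
  one_mem' := by
    refine ⟨fun v _ => rfl, fun F => ?_⟩
    simp
  mul_mem' := by
    rintro a b ⟨ha1, ha2⟩ ⟨hb1, hb2⟩
    refine ⟨fun v hv => ?_, fun F => ?_⟩
    · show a (b v) = v
      rw [hb1 v hv, ha1 v hv]
    · have h : F.image ⇑(a * b) = (F.image ⇑b).image ⇑a := by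
        rw [Finset.image_image]; rfl
      rw [h]
      exact (hb2 F).trans (ha2 (F.image ⇑b))
  inv_mem' := by
    rintro a ⟨ha1, ha2⟩
    refine ⟨fun v hv => ?_, fun F => ?_⟩
    · have := ha1 v hv
      exact a.injective (by simpa using this.symm)
    · have h := ha2 (F.image ⇑a⁻¹)
      have e : (F.image ⇑a⁻¹).image ⇑a = F := by
        rw [Finset.image_image]
        refine Finset.ext fun x => ?_
        simp
      rw [e] at h
      exact h.symm

/-- An icosahedron: a 12-vertex simplicial 2-sphere all whose vertices have degree 5. -/
def IsIcosahedron [Fintype V] [DecidableEq V] (X : Set (Finset V)) : Prop :=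
  Fintype.card V = 12 ∧ (∀ F ∈ X, F.card = 3) ∧ (∀ v : V, {v} ∈ cFaces X) ∧
    (∀ v : V, degS X {v} = 5) ∧ TriangulatesSphere X 2

/-- Two icosahedra on the same vertex set are antimorphic if the identity map
exchanges distance one and distance two. -/
def Antimorphic [DecidableEq V] (X Y : Set (Finset V)) : Prop :=
  ∀ u v : V, u ≠ v →
    (((cGraph X).Adj u v ↔ (cGraph Y).dist u v = 2) ∧
      ((cGraph X).dist u v = 2 ↔ (cGraph Y).Adj u v))

end Generic

/-- The real projective plane, as the quotient of the 2-sphere by the antipodal map. -/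
def antipodalSetoid : Setoid (Metric.sphere (0 : EuclideanSpace ℝ (Fin 3)) 1) where
  r x y := (x : EuclideanSpace ℝ (Fin 3)) = y ∨ (x : EuclideanSpace ℝ (Fin 3)) = -y
  iseqv := by
    constructor
    · intro x; exact Or.inl rfl
    · rintro x y (h | h)
      · exact Or.inl h.symm
      · exact Or.inr (by rw [h, neg_neg])
    · rintro x y z (h1 | h1) (h2 | h2)
      · exact Or.inl (h1.trans h2)
      · exact Or.inr (by rw [h1, h2])
      · exact Or.inr (by rw [h1, h2])
      · exact Or.inl (by rw [h1, h2, neg_neg])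

def RealProjectivePlane : Type := Quotient antipodalSetoid

noncomputable instance : TopologicalSpace RealProjectivePlane :=
  instTopologicalSpaceQuotient

abbrev V4 : Type := Fin 4 × Fin 4

def x (i j : Fin 4) : V4 := (i, j)

/-- Action of a permutation of indices on `V4`, possibly composed with the flip. -/
def permV (σ : Equiv.Perm (Fin 4)) (s : Bool) : V4 → V4 :=
  fun p => if s then (σ p.2, σ p.1) else (σ p.1, σ p.2)

def basic16 : Set (Finset V4) :=
  {({x 0 0, x 1 1, x 2 2, x 0 1, x 0 2} : Finset V4),
   ({x 0 0, x 1 1, x 0 1, x 0 3, x 2 3} : Finset V4),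
   ({x 0 0, x 1 1, x 0 3, x 1 3, x 2 3} : Finset V4),
   ({x 0 0, x 1 1, x 1 0, x 1 3, x 2 0} : Finset V4),
   ({x 0 0, x 1 1, x 1 3, x 2 0, x 2 3} : Finset V4)}

/-- The facets of `(S² × S²)₁₆`. -/
def facets16 : Set (Finset V4) :=
  {F | ∃ σ : Equiv.Perm (Fin 4), Equiv.Perm.sign σ = 1 ∧
    ∃ s : Bool, ∃ B ∈ basic16, F = B.image (permV σ s)}

/-- Sorting an index pair: the quotient map identifying `x i j` with `x j i`. -/
def sortPair : V4 → V4 := fun p => if p.1 ≤ p.2 then p else (p.2, p.1)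

def basic10 : Set (Finset V4) :=
  {({x 0 0, x 1 1, x 2 2, x 0 1, x 0 2} : Finset V4),
   ({x 0 0, x 1 1, x 0 1, x 0 3, x 2 3} : Finset V4),
   ({x 0 0, x 1 1, x 0 3, x 1 3, x 2 3} : Finset V4),
   ({x 0 0, x 1 1, x 0 1, x 0 2, x 1 3} : Finset V4),
   ({x 0 0, x 1 1, x 0 2, x 1 3, x 2 3} : Finset V4)}

/-- The facets of `CP²₁₀`: the orbit of the five basic facets under `A₄` acting
on the indices (followed by sorting each index pair). -/
def facets10 : Set (Finset V4) :=
  {F | ∃ σ : Equiv.Perm (Fin 4), Equiv.Perm.sign σ = 1 ∧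
    ∃ B ∈ basic10, F = B.image (fun p => sortPair (σ p.1, σ p.2))}

/-- The cyclic permutation sending each entry of the list to the next one. -/
def cyc : List V4 → Equiv.Perm V4
  | a :: b :: rest => Equiv.swap a b * cyc (b :: rest)
  | _ => 1

def gPerm : Equiv.Perm V4 :=
  cyc [x 0 1, x 1 0, x 1 3, x 3 1, x 0 3, x 3 0, x 3 2, x 2 3, x 0 2, x 2 0, x 2 1, x 1 2]

def hPerm : Equiv.Perm V4 :=
  cyc [x 0 1, x 0 3, x 1 0, x 1 3, x 2 0] * cyc [x 0 2, x 3 1, x 3 2, x 2 1, x 2 3]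

def G12 : Subgroup (Equiv.Perm V4) := Subgroup.closure {gPerm, hPerm}

def basic12A : Finset V4 := {x 0 1, x 0 3, x 1 0, x 1 3, x 2 0}

def basic12B : Finset V4 := {x 0 1, x 0 2, x 0 3, x 1 0, x 2 0}

/-- The facets of `(S² × S²)₁₂`. -/
def facets12 : Set (Finset V4) :=
  {F | ∃ π ∈ G12, F = basic12A.image ⇑π ∨ F = basic12B.image ⇑π}


/-- The orbit of a facet under the group `A₄ × ℤ₂`. -/
def orbit16 (B : Finset V4) : Set (Finset V4) :=
  {F | ∃ σ : Equiv.Perm (Fin 4), Equiv.Perm.sign σ = 1 ∧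
    ∃ s : Bool, F = B.image (permV σ s)}


private def c3 (a b c : Fin 4) : Equiv.Perm (Fin 4) := Equiv.swap a b * Equiv.swap b c

private def evenL : List (Equiv.Perm (Fin 4)) :=
  [1, Equiv.swap 0 1 * Equiv.swap 2 3, Equiv.swap 0 2 * Equiv.swap 1 3,
   Equiv.swap 0 3 * Equiv.swap 1 2,
   c3 0 1 2, c3 0 2 1, c3 0 1 3, c3 0 3 1, c3 0 2 3, c3 0 3 2, c3 1 2 3, c3 1 3 2]

private lemma mem_evenL : ∀ σ : Equiv.Perm (Fin 4), Equiv.Perm.sign σ = 1 → σ ∈ evenL := by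
  decide

private lemma sign_evenL : ∀ σ ∈ evenL, Equiv.Perm.sign σ = 1 := by decide

private lemma permV_comp (τ σ : Equiv.Perm (Fin 4)) (t s : Bool) (p : V4) :
    permV τ t (permV σ s p) = permV (τ * σ) (xor s t) p := by
  cases s <;> cases t <;> simp [permV]

private def orbitF (B : Finset V4) : Finset (Finset V4) :=
  ((evenL.product [false, true]).map (fun q => B.image (permV q.1 q.2))).toFinset

private lemma orbit16_eq (B : Finset V4) : orbit16 B = ↑(orbitF B) := by
  ext F
  simp only [orbit16, orbitF, Set.mem_setOf_eq, Finset.coe_sort_coe, Finset.mem_coe,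
    List.mem_toFinset, List.mem_map, Prod.exists, List.pair_mem_product]
  constructor
  · rintro ⟨σ, hσ, s, rfl⟩
    exact ⟨σ, s, ⟨mem_evenL σ hσ, by cases s <;> simp⟩, rfl⟩
  · rintro ⟨σ, s, ⟨hσ, -⟩, rfl⟩
    exact ⟨σ, sign_evenL σ hσ, s, rfl⟩

/-- `A₄ × ℤ₂` acts on `(S² × S²)₁₆` by simplicial automorphisms;
the orbits of the five basic facets have lengths 24, 24, 24, 12, 12. -/
theorem stmt_2 :
    (∀ σ : Equiv.Perm (Fin 4), Equiv.Perm.sign σ = 1 → ∀ s : Bool,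
      ∀ F ∈ facets16, F.image (permV σ s) ∈ facets16) ∧
    Set.ncard (orbit16 ({x 0 0, x 1 1, x 2 2, x 0 1, x 0 2} : Finset V4)) = 24 ∧
    Set.ncard (orbit16 ({x 0 0, x 1 1, x 0 1, x 0 3, x 2 3} : Finset V4)) = 24 ∧
    Set.ncard (orbit16 ({x 0 0, x 1 1, x 0 3, x 1 3, x 2 3} : Finset V4)) = 24 ∧
    Set.ncard (orbit16 ({x 0 0, x 1 1, x 1 0, x 1 3, x 2 0} : Finset V4)) = 12 ∧
    Set.ncard (orbit16 ({x 0 0, x 1 1, x 1 3, x 2 0, x 2 3} : Finset V4)) = 12 := by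
  refine ⟨?_, ?_, ?_, ?_, ?_, ?_⟩
  · rintro τ hτ t F ⟨σ, hσ, s, B, hB, rfl⟩
    refine ⟨τ * σ, by simp [hτ, hσ], xor s t, B, hB, ?_⟩
    rw [Finset.image_image]
    exact Finset.image_congr (fun p _ => permV_comp τ σ t s p)
  all_goals rw [orbit16_eq, Set.ncard_coe_finset]
  all_goals decide
end

section
/- In the simplicial complex (S^2 × S^2)_16, for every i ≠ j the pair {x_{ij}, x_{ji}} is a non-edge, i.e., no facet contains both x_{ij} and x_{ji}. -/
open Finset

/-- in `(S² × S²)₁₆`, for `i ≠ j` the pair `{x i j, x j i}` is a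
non-edge: no facet contains both. -/
theorem stmt_3 :
    ∀ i j : Fin 4, i ≠ j → ∀ F ∈ facets16, ¬(x i j ∈ F ∧ x j i ∈ F) := by
  rintro i j hij F hF ⟨h1, h2⟩
  obtain ⟨σ, -, s, B, hB, rfl⟩ := hF
  simp only [Finset.mem_image] at h1 h2
  obtain ⟨p, hp, hps⟩ := h1
  obtain ⟨q, hq, hqs⟩ := h2
  have key : p.1 = q.2 ∧ p.2 = q.1 := by
    cases s <;> simp only [permV, x, if_true, if_false, Prod.ext_iff] at hps hqs
    · exact ⟨σ.injective (hps.1.trans hqs.2.symm), σ.injective (hps.2.trans hqs.1.symm)⟩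
    · exact ⟨σ.injective (hps.2.trans hqs.1.symm), σ.injective (hps.1.trans hqs.2.symm)⟩
  have hpq : p ≠ q := by
    rintro rfl
    cases s <;> simp only [permV, x, if_true, if_false, Prod.ext_iff] at hps hqs
    · exact hij (hps.1.symm.trans hqs.1)
    · exact hij (hps.1.symm.trans hqs.1)
  have hgen : ∀ r ∈ B, ∀ t ∈ B, r.1 = t.2 → r.2 = t.1 → r = t := by
    simp only [basic16, Set.mem_insert_iff, Set.mem_singleton_iff] at hB
    rcases hB with rfl | rfl | rfl | rfl | rfl <;> decide
  exact hpq (hgen p hp q hq key.1 key.2)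
end

section
/- The full automorphism group of the simplicial complex CP^2_10 is isomorphic to the alternating group A_4; in particular it has exactly 12 automorphisms. -/
open Finset

/-! ### Auxiliary machinery for `stmt_6` -/

section CP2Aux

/-- Numeric code of a vertex. -/
def codeV (v : V4) : ℕ := 4 * v.1.val + v.2.val

def decodeV (k : ℕ) : V4 :=
  (⟨k / 4 % 4, Nat.mod_lt _ (by norm_num)⟩, ⟨k % 4, Nat.mod_lt _ (by norm_num)⟩)

lemma decode_code : ∀ v : V4, decodeV (codeV v) = v := by decide

lemma code_decode : ∀ k : ℕ, k < 16 → codeV (decodeV k) = k := by decide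

lemma codeV_lt : ∀ v : V4, codeV v < 16 := by decide

lemma codeV_inj : Function.Injective codeV := fun a b h => by
  rw [← decode_code a, ← decode_code b, h]

/-- extraction of the `k`-th binary digit of a sum of distinct two-powers -/
lemma sum_two_pow_div_mod (S : Finset ℕ) (k : ℕ) :
    (∑ i ∈ S, 2 ^ i) / 2 ^ k % 2 = if k ∈ S then 1 else 0 := by
  classical
  have hsplit1 := Finset.sum_filter_add_sum_filter_not S (fun i => i < k) (fun i => 2 ^ i)
  have hsplit2 := Finset.sum_filter_add_sum_filter_not (S.filter (fun i => ¬ i < k))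
    (fun i => i = k) (fun i => 2 ^ i)
  have hek : (S.filter (fun i => ¬ i < k)).filter (fun i => i = k) = S.filter (fun i => i = k) := by
    ext i
    simp only [Finset.mem_filter]
    constructor
    · rintro ⟨⟨h1, -⟩, h3⟩; exact ⟨h1, h3⟩
    · rintro ⟨h1, rfl⟩; exact ⟨⟨h1, lt_irrefl _⟩, rfl⟩
  have hck : (S.filter (fun i => ¬ i < k)).filter (fun i => ¬ i = k) =
      S.filter (fun i => k < i) := by
    ext i
    simp only [Finset.mem_filter]
    constructor
    · rintro ⟨⟨h1, h2⟩, h3⟩; exact ⟨h1, by omega⟩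
    · rintro ⟨h1, h2⟩; exact ⟨⟨h1, by omega⟩, by omega⟩
  have heps : ∑ i ∈ S.filter (fun i => i = k), 2 ^ i = (if k ∈ S then 1 else 0) * 2 ^ k := by
    rw [Finset.filter_eq']
    split_ifs with h
    · rw [Finset.sum_singleton, one_mul]
    · rw [Finset.sum_empty, zero_mul]
  have hcdvd : ∑ i ∈ S.filter (fun i => k < i), 2 ^ i =
      2 ^ k * (2 * ∑ i ∈ S.filter (fun i => k < i), 2 ^ (i - (k + 1))) := by
    rw [Finset.mul_sum, Finset.mul_sum]
    refine Finset.sum_congr rfl fun i hi => ?_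
    have hki : k < i := (Finset.mem_filter.mp hi).2
    have h2i : (2 : ℕ) ^ i = 2 ^ (k + 1) * 2 ^ (i - (k + 1)) := by
      rw [← pow_add]
      congr 1
      omega
    rw [h2i, pow_succ]
    ring
  have hA : ∑ i ∈ S.filter (fun i => i < k), 2 ^ i < 2 ^ k := by
    have hsub : S.filter (fun i => i < k) ⊆ Finset.range k := fun i hi =>
      Finset.mem_range.mpr (Finset.mem_filter.mp hi).2
    have h1 : ∑ i ∈ S.filter (fun i => i < k), 2 ^ i ≤ ∑ i ∈ Finset.range k, 2 ^ i :=
      Finset.sum_le_sum_of_subset hsub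
    have h2 : ∑ i ∈ Finset.range k, 2 ^ i = (2 ^ k - 1) / (2 - 1) := Nat.geomSum_eq le_rfl k
    have h3 : (0:ℕ) < 2 ^ k := pow_pos (by norm_num) k
    omega
  have htotal : ∑ i ∈ S, 2 ^ i = (∑ i ∈ S.filter (fun i => i < k), 2 ^ i) +
      2 ^ k * ((if k ∈ S then 1 else 0) +
        2 * ∑ i ∈ S.filter (fun i => k < i), 2 ^ (i - (k + 1))) := by
    rw [← hsplit1, ← hsplit2, hek, hck, heps, hcdvd]
    ring
  rw [htotal, Nat.add_mul_div_left _ _ (pow_pos (by norm_num) k),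
    Nat.div_eq_of_lt hA, zero_add, Nat.add_mul_mod_self_left]
  split_ifs <;> rfl

lemma mask_bit_iff (S : Finset ℕ) (k : ℕ) : k ∈ S ↔ (∑ i ∈ S, 2 ^ i) / 2 ^ k % 2 = 1 := by
  rw [sum_two_pow_div_mod]
  split_ifs with h <;> simp [h]

/-- Bitmask of a finite set of vertices. -/
def maskF (F : Finset V4) : ℕ := ∑ v ∈ F, 2 ^ codeV v

lemma maskF_eq (F : Finset V4) : maskF F = ∑ i ∈ F.image codeV, 2 ^ i :=
  (Finset.sum_image (fun a _ b _ h => codeV_inj h)).symm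

lemma maskF_bit (F : Finset V4) (k : ℕ) :
    k ∈ F.image codeV ↔ maskF F / 2 ^ k % 2 = 1 := by
  rw [maskF_eq]
  exact mask_bit_iff _ k

lemma maskF_inj : Function.Injective maskF := by
  intro F G h
  have h2 : F.image codeV = G.image codeV := Finset.ext fun k => by
    rw [maskF_bit, maskF_bit, h]
  exact Finset.image_injective codeV_inj h2

lemma maskF_lt (F : Finset V4) : maskF F < 65536 := by
  have hsub : F.image codeV ⊆ Finset.range 16 := fun k hk => by
    obtain ⟨v, -, rfl⟩ := Finset.mem_image.mp hk
    exact Finset.mem_range.mpr (codeV_lt v)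
  have h1 : maskF F ≤ ∑ i ∈ Finset.range 16, 2 ^ i := by
    rw [maskF_eq]
    exact Finset.sum_le_sum_of_subset hsub
  have h2 : ∑ i ∈ Finset.range 16, 2 ^ i = 65535 := by
    rw [Nat.geomSum_eq le_rfl 16]
    decide
  omega

/-- list of the bits (all `< 16`) of a mask -/
def bits16 (m : ℕ) : List ℕ := (List.range 16).filter (fun k => m / 2 ^ k % 2 = 1)

lemma bits16_nodup (m : ℕ) : (bits16 m).Nodup := (List.nodup_range (n := 16)).filter _

lemma bits16_toFinset (F : Finset V4) : (bits16 (maskF F)).toFinset = F.image codeV := by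
  ext k
  simp only [bits16, List.mem_toFinset, List.mem_filter, List.mem_range, decide_eq_true_eq]
  constructor
  · rintro ⟨-, hb⟩
    exact (maskF_bit F k).mpr hb
  · intro h
    refine ⟨?_, (maskF_bit F k).mp h⟩
    obtain ⟨v, -, rfl⟩ := Finset.mem_image.mp h
    exact codeV_lt v

/-- mask-level image of a map on bit positions. -/
def mimg (gn : ℕ → ℕ) (m : ℕ) : ℕ := ((bits16 m).map fun k => 2 ^ gn k).sum

lemma maskF_image (g : V4 → V4) (gn : ℕ → ℕ) (hgn : ∀ v : V4, gn (codeV v) = codeV (g v))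
    (F : Finset V4) (hg : Set.InjOn g F) : maskF (F.image g) = mimg gn (maskF F) := by
  have h1 : maskF (F.image g) = ∑ v ∈ F, 2 ^ codeV (g v) :=
    Finset.sum_image (fun a ha b hb h => hg ha hb h)
  have h2 : mimg gn (maskF F) = ∑ i ∈ (bits16 (maskF F)).toFinset, 2 ^ gn i :=
    (List.sum_toFinset _ (bits16_nodup _)).symm
  rw [h1, h2, bits16_toFinset, Finset.sum_image (fun a _ b _ h => codeV_inj h)]
  exact Finset.sum_congr rfl fun v _ => by rw [hgn v]

/-- Decoding a mask back to a vertex set. -/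
def conv16 (m : ℕ) : Finset V4 :=
  ((Finset.range 16).filter (fun k => m / 2 ^ k % 2 = 1)).image decodeV

lemma mem_conv16 (m : ℕ) (v : V4) : v ∈ conv16 m ↔ m / 2 ^ (codeV v) % 2 = 1 := by
  simp only [conv16, Finset.mem_image, Finset.mem_filter, Finset.mem_range]
  constructor
  · rintro ⟨k, ⟨hk16, hb⟩, rfl⟩
    rwa [code_decode k hk16]
  · intro h
    exact ⟨codeV v, ⟨codeV_lt v, h⟩, decode_code v⟩

lemma bit_eq_of_iff {a b : ℕ} (h : a % 2 = 1 ↔ b % 2 = 1) :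
    a % 2 = b % 2 := by
  rcases Nat.mod_two_eq_zero_or_one a with h1 | h1 <;>
    rcases Nat.mod_two_eq_zero_or_one b with h2 | h2
  · omega
  · have := h.mpr h2; omega
  · have := h.mp h1; omega
  · omega

lemma maskF_conv16 {m : ℕ} (hm : m < 65536) : maskF (conv16 m) = m := by
  have himg : (conv16 m).image codeV =
      (Finset.range 16).filter (fun k => m / 2 ^ k % 2 = 1) := by
    rw [conv16, Finset.image_image]
    have heq : Set.EqOn (codeV ∘ decodeV) id
        ((Finset.range 16).filter (fun k => m / 2 ^ k % 2 = 1)) := by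
      intro k hk
      simp only [Finset.coe_filter, Set.mem_setOf_eq, Finset.mem_range] at hk
      exact code_decode k hk.1
    rw [Finset.image_congr heq, Finset.image_id]
  have hlt : maskF (conv16 m) < 65536 := maskF_lt _
  apply Nat.eq_of_testBit_eq
  intro k
  rw [Nat.testBit_eq_decide_div_mod_eq, Nat.testBit_eq_decide_div_mod_eq]
  by_cases hk : k < 16
  · have hiff : (maskF (conv16 m) / 2 ^ k % 2 = 1) ↔ (m / 2 ^ k % 2 = 1) := by
      rw [← maskF_bit (conv16 m) k, himg]
      simp [Finset.mem_filter, Finset.mem_range, hk]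
    rw [bit_eq_of_iff hiff]
  · have h16 : (65536 : ℕ) ≤ 2 ^ k := by
      calc (65536 : ℕ) = 2 ^ 16 := by norm_num
      _ ≤ 2 ^ k := Nat.pow_le_pow_right (by norm_num) (by omega)
    rw [Nat.div_eq_of_lt (by omega), Nat.div_eq_of_lt (by omega)]
/-! ### Numerical data -/

def M48 : List ℕ := [167, 1063, 1159, 2091, 32811, 34827, 1123, 2147, 32931, 1219, 32963,
  34883, 1101, 32845, 33805, 1125, 2149, 2213, 34885, 3205, 35845, 2217, 32937, 1225, 32969,
  3209, 35849, 1070, 32814, 33806, 32934, 33926, 3114, 35850, 3170, 33986, 35906, 1132, 32876,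
  34916, 34980, 35972, 1256, 33000, 3240, 34016, 35936, 36000]

def BM : List ℕ := [1063, 2091, 2217, 167, 2213]

def allA4 : List (Fin 4 → Fin 4) := [![0,1,2,3], ![0,2,3,1], ![0,3,1,2], ![1,0,3,2],
  ![1,2,0,3], ![1,3,2,0], ![2,0,1,3], ![2,1,3,0], ![2,3,0,1], ![3,0,2,1], ![3,1,0,2], ![3,2,1,0]]

lemma M48_lt : ∀ m ∈ M48, m < 65536 := by decide

lemma M48_nodup : M48.Nodup := by decide

def gnS (f : Fin 4 → Fin 4) : ℕ → ℕ :=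
  fun k => codeV (sortPair (f (decodeV k).1, f (decodeV k).2))

def actFT (f : Fin 4 → Fin 4) : V4 → V4 :=
  fun p => if p.1 ≤ p.2 then sortPair (f p.1, f p.2) else p

def actF (σ : Equiv.Perm (Fin 4)) : V4 → V4 := actFT ⇑σ

def gnA (f : Fin 4 → Fin 4) : ℕ → ℕ := fun k => codeV (actFT f (decodeV k))

set_option maxRecDepth 20000 in
set_option maxHeartbeats 4000000 in
lemma DM1 : ∀ f ∈ allA4, ∀ mb ∈ BM, mimg (gnS f) mb ∈ M48 := by decide

set_option maxRecDepth 20000 in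
set_option maxHeartbeats 4000000 in
lemma DM2 : ∀ m ∈ M48, ∃ f ∈ allA4, ∃ mb ∈ BM, m = mimg (gnS f) mb := by decide

set_option maxRecDepth 20000 in
set_option maxHeartbeats 4000000 in
lemma DM3 : ∀ f ∈ allA4, ∀ m ∈ M48, mimg (gnA f) m ∈ M48 := by decide

set_option maxRecDepth 20000 in
set_option maxHeartbeats 4000000 in
lemma perm_table : ∀ σ : Equiv.Perm (Fin 4), Equiv.Perm.sign σ = 1 → ⇑σ ∈ allA4 := by decide

set_option maxRecDepth 20000 in
set_option maxHeartbeats 4000000 in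
lemma table_to_perm : ∀ f ∈ allA4, ∃ σ : Equiv.Perm (Fin 4), ⇑σ = f ∧ Equiv.Perm.sign σ = 1 := by
  intro f hf
  fin_cases hf
  · exact ⟨⟨![0,1,2,3], ![0,1,2,3], by decide, by decide⟩, rfl, by decide⟩
  · exact ⟨⟨![0,2,3,1], ![0,3,1,2], by decide, by decide⟩, rfl, by decide⟩
  · exact ⟨⟨![0,3,1,2], ![0,2,3,1], by decide, by decide⟩, rfl, by decide⟩
  · exact ⟨⟨![1,0,3,2], ![1,0,3,2], by decide, by decide⟩, rfl, by decide⟩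
  · exact ⟨⟨![1,2,0,3], ![2,0,1,3], by decide, by decide⟩, rfl, by decide⟩
  · exact ⟨⟨![1,3,2,0], ![3,0,2,1], by decide, by decide⟩, rfl, by decide⟩
  · exact ⟨⟨![2,0,1,3], ![1,2,0,3], by decide, by decide⟩, rfl, by decide⟩
  · exact ⟨⟨![2,1,3,0], ![3,1,0,2], by decide, by decide⟩, rfl, by decide⟩
  · exact ⟨⟨![2,3,0,1], ![2,3,0,1], by decide, by decide⟩, rfl, by decide⟩
  · exact ⟨⟨![3,0,2,1], ![1,3,2,0], by decide, by decide⟩, rfl, by decide⟩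
  · exact ⟨⟨![3,1,0,2], ![2,1,3,0], by decide, by decide⟩, rfl, by decide⟩
  · exact ⟨⟨![3,2,1,0], ![3,2,1,0], by decide, by decide⟩, rfl, by decide⟩

/-! ### sortPair lemmas -/

lemma sortPair_comm (a b : Fin 4) : sortPair (a, b) = sortPair (b, a) := by
  unfold sortPair
  dsimp only
  split_ifs with h1 h2 h2
  · rw [le_antisymm h1 h2]
  · rfl
  · rfl
  · exact absurd ((le_total a b).resolve_left h1) h2

lemma sortPair_of_le {p : V4} (h : p.1 ≤ p.2) : sortPair p = p := if_pos h

lemma actFT_of_le {f : Fin 4 → Fin 4} {p : V4} (h : p.1 ≤ p.2) :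
    actFT f p = sortPair (f p.1, f p.2) := if_pos h

lemma actFT_of_not {f : Fin 4 → Fin 4} {p : V4} (h : ¬ p.1 ≤ p.2) : actFT f p = p := if_neg h

lemma actF_diag (σ : Equiv.Perm (Fin 4)) (i : Fin 4) : actF σ (i, i) = (σ i, σ i) := by
  rw [actF, actFT_of_le (le_refl i)]
  exact sortPair_of_le (le_refl (σ i))

lemma actF_comp (σ τ : Equiv.Perm (Fin 4)) (p : V4) :
    actF σ (actF τ p) = actF (σ * τ) p := by
  by_cases h : p.1 ≤ p.2
  · rw [actF, actF, actF, actFT_of_le h, actFT_of_le h]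
    have hmul : ∀ i : Fin 4, (σ * τ) i = σ (τ i) := fun i => rfl
    by_cases h2 : τ p.1 ≤ τ p.2
    · rw [sortPair_of_le h2, actFT_of_le h2, hmul, hmul]
    · have h2' : τ p.2 ≤ τ p.1 := le_of_not_ge h2
      rw [show sortPair (τ p.1, τ p.2) = (τ p.2, τ p.1) from if_neg h2,
        actFT_of_le (show (τ p.2, τ p.1).1 ≤ (τ p.2, τ p.1).2 from h2'), hmul, hmul]
      exact sortPair_comm _ _
  · rw [actF, actF, actF, actFT_of_not h, actFT_of_not h, actFT_of_not h]

lemma actF_one (p : V4) : actF 1 p = p := by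
  by_cases h : p.1 ≤ p.2
  · rw [actF, actFT_of_le h]
    show sortPair (p.1, p.2) = p
    rw [show (p.1, p.2) = p from rfl]
    exact sortPair_of_le h
  · exact actFT_of_not h

/-- The permutation of `V4` induced by an (even) permutation of indices. -/
def actE (σ : Equiv.Perm (Fin 4)) : Equiv.Perm V4 :=
  ⟨actF σ, actF σ⁻¹,
   fun p => by rw [actF_comp, inv_mul_cancel, actF_one],
   fun p => by rw [actF_comp, mul_inv_cancel, actF_one]⟩

lemma actE_coe (σ : Equiv.Perm (Fin 4)) : ⇑(actE σ) = actF σ := rfl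

lemma actE_mul (σ τ : Equiv.Perm (Fin 4)) : actE σ * actE τ = actE (σ * τ) :=
  Equiv.ext fun p => actF_comp σ τ p

lemma actE_one : actE 1 = 1 := Equiv.ext fun p => actF_one p

/-! ### characterisation of the facets -/

lemma sortPair_eq_cases {a b c d : Fin 4} (h : sortPair (a, b) = sortPair (c, d)) :
    (a = c ∧ b = d) ∨ (a = d ∧ b = c) := by
  unfold sortPair at h
  dsimp only at h
  split_ifs at h <;> simp [Prod.ext_iff] at h <;> tauto

lemma fS_injOn (σ : Equiv.Perm (Fin 4)) {B : Finset V4} (hB : ∀ v ∈ B, v.1 ≤ v.2) :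
    Set.InjOn (fun p : V4 => sortPair (σ p.1, σ p.2)) B := by
  intro v hv w hw h
  rcases sortPair_eq_cases h with ⟨h1, h2⟩ | ⟨h1, h2⟩
  · have e1 := σ.injective h1
    have e2 := σ.injective h2
    rw [← Prod.mk.eta (p := v), ← Prod.mk.eta (p := w), e1, e2]
  · have e1 := σ.injective h1
    have e2 := σ.injective h2
    have hv' := hB v hv
    have hw' := hB w hw
    have h3 : v.1 = v.2 := le_antisymm hv' (e2 ▸ e1 ▸ hw')
    rw [← Prod.mk.eta (p := v), ← Prod.mk.eta (p := w), ← e1, ← e2, ← h3, h3]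

lemma gnS_spec (σ : Equiv.Perm (Fin 4)) (v : V4) :
    gnS ⇑σ (codeV v) = codeV ((fun p : V4 => sortPair (σ p.1, σ p.2)) v) := by
  unfold gnS
  rw [decode_code]

lemma mem_facets10_mask (F : Finset V4) : F ∈ facets10 ↔ maskF F ∈ M48 := by
  constructor
  · rintro ⟨σ, hσ, B, hB, rfl⟩
    have hBdata : (∀ v ∈ B, v.1 ≤ v.2) ∧ maskF B ∈ BM := by
      simp only [basic10, Set.mem_insert_iff, Set.mem_singleton_iff] at hB
      rcases hB with rfl | rfl | rfl | rfl | rfl <;> exact ⟨by decide, by decide⟩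
    rw [maskF_image _ (gnS ⇑σ) (gnS_spec σ) B (fS_injOn σ hBdata.1)]
    exact DM1 ⇑σ (perm_table σ hσ) (maskF B) hBdata.2
  · intro hm
    obtain ⟨f, hf, mb, hmb, hEq⟩ := DM2 (maskF F) hm
    obtain ⟨σ, hσc, hσs⟩ := table_to_perm f hf
    have hBdata : ∃ B, B ∈ basic10 ∧ (∀ v ∈ B, v.1 ≤ v.2) ∧ maskF B = mb := by
      fin_cases hmb
      · exact ⟨_, Or.inl rfl, by decide, by decide⟩
      · exact ⟨_, Or.inr (Or.inl rfl), by decide, by decide⟩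
      · exact ⟨_, Or.inr (Or.inr (Or.inl rfl)), by decide, by decide⟩
      · exact ⟨_, Or.inr (Or.inr (Or.inr (Or.inl rfl))), by decide, by decide⟩
      · exact ⟨_, Or.inr (Or.inr (Or.inr (Or.inr rfl))), by decide, by decide⟩
    obtain ⟨B, hB10, hBsort, hBmask⟩ := hBdata
    refine ⟨σ, hσs, B, hB10, ?_⟩
    apply maskF_inj
    rw [maskF_image _ (gnS ⇑σ) (gnS_spec σ) B (fS_injOn σ hBsort), hBmask, hσc, ← hEq]

/-! ### The facet list as a `Finset` and counting -/

def F48F : Finset (Finset V4) := (M48.map conv16).toFinset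

lemma mem_F48F (F : Finset V4) : F ∈ F48F ↔ maskF F ∈ M48 := by
  simp only [F48F, List.mem_toFinset, List.mem_map]
  constructor
  · rintro ⟨m, hm, rfl⟩; rwa [maskF_conv16 (M48_lt m hm)]
  · intro h
    exact ⟨maskF F, h, maskF_inj (by rw [maskF_conv16 (M48_lt _ h)])⟩

lemma mem_facets10_F48F (F : Finset V4) : F ∈ facets10 ↔ F ∈ F48F := by
  rw [mem_facets10_mask, mem_F48F]

def cntS (S : Finset V4) : ℕ := (F48F.filter (fun F => S ⊆ F)).card

lemma cntS_eq (S : Finset V4) (q : ℕ → Bool)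
    (hq : ∀ m ∈ M48, (S ⊆ conv16 m ↔ q m = true)) :
    cntS S = (M48.filter q).length := by
  have hnd : (M48.map conv16).Nodup :=
    List.Nodup.map_on (fun a ha b hb h => by
      rw [← maskF_conv16 (M48_lt a ha), ← maskF_conv16 (M48_lt b hb), h]) M48_nodup
  have h1 : F48F.filter (fun F => S ⊆ F) =
      ((M48.map conv16).filter (fun F => decide (S ⊆ F))).toFinset := by
    ext A
    simp only [F48F, Finset.mem_filter, List.mem_toFinset, List.mem_filter,
      decide_eq_true_eq]
  rw [cntS, h1, List.toFinset_card_of_nodup (hnd.filter _)]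
  have h2 : (M48.map conv16).filter (fun F => decide (S ⊆ F)) =
      (M48.filter (fun m => decide (S ⊆ conv16 m))).map conv16 := by
    rw [List.filter_map]
    rfl
  rw [h2, List.length_map]
  congr 1
  refine List.filter_congr fun m hm => ?_
  by_cases hS : S ⊆ conv16 m
  · rw [decide_eq_true hS]
    exact ((hq m hm).mp hS).symm
  · have hq' : q m ≠ true := fun h => hS ((hq m hm).mpr h)
    rw [decide_eq_false hS]
    exact (Bool.eq_false_iff.mpr hq').symm

def CN1 (c : ℕ) : ℕ := (M48.filter (fun m => decide (m / 2 ^ c % 2 = 1))).length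

def CN3 (a b c : ℕ) : ℕ :=
  (M48.filter (fun m => decide (m / 2 ^ a % 2 = 1) && decide (m / 2 ^ b % 2 = 1)
    && decide (m / 2 ^ c % 2 = 1))).length

lemma cnt_single (v : V4) : cntS {v} = CN1 (codeV v) := by
  refine cntS_eq _ _ fun m _ => ?_
  rw [Finset.singleton_subset_iff, mem_conv16]
  simp only [decide_eq_true_eq]

lemma cnt_triple (a b c : V4) : cntS {a, b, c} = CN3 (codeV a) (codeV b) (codeV c) := by
  refine cntS_eq _ _ fun m _ => ?_
  simp only [Finset.insert_subset_iff, Finset.singleton_subset_iff,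
    mem_conv16, Bool.and_eq_true, decide_eq_true_eq]
  tauto

set_option maxRecDepth 20000 in
set_option maxHeartbeats 4000000 in
lemma CN1_diag : ∀ i : Fin 4, CN1 (codeV (i, i)) = 27 := by decide

set_option maxRecDepth 20000 in
set_option maxHeartbeats 4000000 in
lemma CN1_uniq : ∀ w : V4, w.1 ≤ w.2 → CN1 (codeV w) = 27 → w.1 = w.2 := by decide

set_option maxRecDepth 20000 in
set_option maxHeartbeats 4000000 in
lemma CN3_val : ∀ a b : Fin 4, a ≠ b →
    CN3 (codeV (sortPair (a, b))) (codeV (a, a)) (codeV (b, b)) = 7 := by decide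

set_option maxRecDepth 20000 in
set_option maxHeartbeats 4000000 in
lemma CN3_uniq : ∀ w : V4, w.1 ≤ w.2 → ∀ a b : Fin 4, a ≠ b →
    CN3 (codeV w) (codeV (a, a)) (codeV (b, b)) = 7 → w = sortPair (a, b) := by decide

lemma cntS_le (g : Equiv.Perm V4) (hg : ∀ F ∈ F48F, F.image ⇑g ∈ F48F) (S : Finset V4) :
    cntS S ≤ cntS (S.image ⇑g) := by
  apply Finset.card_le_card_of_injOn (fun F => F.image ⇑g)
  · intro F hF
    rw [Finset.mem_coe, Finset.mem_filter] at hF ⊢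
    exact ⟨hg F hF.1, Finset.image_subset_image hF.2⟩
  · exact fun F _ G _ h => Finset.image_injective g.injective h

lemma image_image_inv (g : Equiv.Perm V4) (S : Finset V4) :
    (S.image ⇑g).image ⇑g⁻¹ = S := by
  rw [Finset.image_image]
  have h : (⇑g⁻¹ ∘ ⇑g) = id := funext fun v => g.symm_apply_apply v
  rw [h, Finset.image_id]

lemma cntS_aut (g : Equiv.Perm V4) (hg : ∀ F : Finset V4, F ∈ F48F ↔ F.image ⇑g ∈ F48F)
    (S : Finset V4) : cntS (S.image ⇑g) = cntS S := by
  have hfwd : ∀ F ∈ F48F, F.image ⇑g ∈ F48F := fun F hF => (hg F).mp hF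
  have hbwd : ∀ F ∈ F48F, F.image ⇑g⁻¹ ∈ F48F := by
    intro F hF
    apply (hg (F.image ⇑g⁻¹)).mpr
    rw [Finset.image_image]
    have h : (⇑g ∘ ⇑g⁻¹) = id := funext fun v => g.apply_symm_apply v
    rwa [h, Finset.image_id]
  refine le_antisymm ?_ (cntS_le g hfwd S)
  have h := cntS_le g⁻¹ hbwd (S.image ⇑g)
  rwa [image_image_inv] at h

/-! ### Automorphisms -/

lemma mem_autRel' {π : Equiv.Perm V4} :
    π ∈ autRel facets10 {p : V4 | ¬ p.1 ≤ p.2} ↔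
      ((∀ v : V4, ¬ v.1 ≤ v.2 → π v = v) ∧
        ∀ F : Finset V4, F ∈ facets10 ↔ F.image ⇑π ∈ facets10) :=
  Iff.rfl

lemma aut_F48F {π : Equiv.Perm V4} (hπ : π ∈ autRel facets10 {p : V4 | ¬ p.1 ≤ p.2}) :
    ∀ F : Finset V4, F ∈ F48F ↔ F.image ⇑π ∈ F48F := fun F => by
  rw [← mem_facets10_F48F, ← mem_facets10_F48F]
  exact (mem_autRel'.mp hπ).2 F

lemma actE_mem (σ : Equiv.Perm (Fin 4)) (hσ : Equiv.Perm.sign σ = 1) :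
    actE σ ∈ autRel facets10 {p : V4 | ¬ p.1 ≤ p.2} := by
  rw [mem_autRel']
  constructor
  · intro v hv
    exact actFT_of_not hv
  · intro F
    rw [mem_facets10_mask, mem_facets10_mask]
    have hgn : ∀ v : V4, gnA ⇑σ (codeV v) = codeV (actF σ v) := fun v => by
      unfold gnA
      rw [decode_code]
      rfl
    constructor
    · intro h
      rw [actE_coe, maskF_image (actF σ) (gnA ⇑σ) hgn F (actE σ).injective.injOn]
      exact DM3 ⇑σ (perm_table σ hσ) _ h
    · intro h
      have hσ' : Equiv.Perm.sign σ⁻¹ = 1 := by rw [map_inv, hσ, inv_one]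
      have hgn' : ∀ v : V4, gnA ⇑σ⁻¹ (codeV v) = codeV (actF σ⁻¹ v) := fun v => by
        unfold gnA
        rw [decode_code]
        rfl
      have h2 : maskF ((F.image ⇑(actE σ)).image (actF σ⁻¹)) ∈ M48 := by
        rw [maskF_image (actF σ⁻¹) (gnA ⇑σ⁻¹) hgn' _ (actE σ⁻¹).injective.injOn]
        exact DM3 ⇑σ⁻¹ (perm_table σ⁻¹ hσ') _ h
      rwa [actE_coe, Finset.image_image,
        show (actF σ⁻¹ ∘ actF σ) = id from funext fun p => by
          rw [Function.comp_apply, actF_comp, inv_mul_cancel, actF_one]; rfl,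
        Finset.image_id] at h2

lemma sorted_map (ρ : Equiv.Perm V4) (hfix : ∀ v : V4, ¬ v.1 ≤ v.2 → ρ v = v) :
    ∀ v : V4, v.1 ≤ v.2 → (ρ v).1 ≤ (ρ v).2 := by
  intro v hv
  by_contra h
  have h2 := ρ.injective (hfix _ h)
  rw [h2] at h
  exact h hv

lemma offdiag_det (ρ : Equiv.Perm V4)
    (hρF : ∀ F : Finset V4, F ∈ F48F ↔ F.image ⇑ρ ∈ F48F)
    (hfix : ∀ v : V4, ¬ v.1 ≤ v.2 → ρ v = v)
    (sw : Fin 4 → Fin 4) (hsw : Function.Injective sw)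
    (hdiag : ∀ i : Fin 4, ρ (i, i) = (sw i, sw i))
    (v : V4) (hle : v.1 ≤ v.2) (hne : v.1 ≠ v.2) :
    ρ v = sortPair (sw v.1, sw v.2) := by
  have hsort := sorted_map ρ hfix v hle
  have hpres := cntS_aut ρ hρF {v, (v.1, v.1), (v.2, v.2)}
  have himg : ({v, (v.1, v.1), (v.2, v.2)} : Finset V4).image ⇑ρ =
      {ρ v, (sw v.1, sw v.1), (sw v.2, sw v.2)} := by
    rw [Finset.image_insert, Finset.image_insert, Finset.image_singleton, hdiag, hdiag]
  have h7 : cntS {v, (v.1, v.1), (v.2, v.2)} = 7 := by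
    rw [cnt_triple]
    have hval := CN3_val v.1 v.2 hne
    rwa [show sortPair (v.1, v.2) = v from by rw [Prod.mk.eta]; exact sortPair_of_le hle]
      at hval
  have h7' : CN3 (codeV (ρ v)) (codeV (sw v.1, sw v.1)) (codeV (sw v.2, sw v.2)) = 7 := by
    rw [← cnt_triple, ← himg, hpres, h7]
  exact CN3_uniq (ρ v) hsort (sw v.1) (sw v.2) (fun h => hne (hsw h)) h7'

end CP2Aux

section CP2Main

/-- The homomorphism from `A₄` to the automorphism group of `CP²₁₀`. -/
def φA : alternatingGroup (Fin 4) →* ↥(autRel facets10 {p : V4 | ¬ p.1 ≤ p.2}) where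
  toFun σ := ⟨actE ↑σ, actE_mem ↑σ (Equiv.Perm.mem_alternatingGroup.mp σ.2)⟩
  map_one' := by
    apply Subtype.ext
    show actE ↑(1 : alternatingGroup (Fin 4)) = 1
    rw [OneMemClass.coe_one, actE_one]
  map_mul' a b := by
    apply Subtype.ext
    show actE ↑(a * b) = actE ↑a * actE ↑b
    rw [MulMemClass.coe_mul, actE_mul]

lemma φA_inj : Function.Injective φA := by
  intro a b h
  have h' : actE ↑a = actE ↑b := Subtype.ext_iff.mp h
  apply Subtype.ext
  apply Equiv.ext
  intro i
  have h2 : actE (↑a : Equiv.Perm (Fin 4)) (i, i) = actE (↑b : Equiv.Perm (Fin 4)) (i, i) := by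
    rw [h']
  rw [actE_coe, actE_coe, actF_diag, actF_diag] at h2
  exact congrArg Prod.fst h2

lemma φA_surj : Function.Surjective φA := by
  rintro ⟨π, hπ⟩
  have hfix : ∀ v : V4, ¬ v.1 ≤ v.2 → π v = v := (mem_autRel'.mp hπ).1
  have hπF : ∀ F : Finset V4, F ∈ F48F ↔ F.image ⇑π ∈ F48F := aut_F48F hπ
  have hdiag : ∀ i : Fin 4, (π (i, i)).1 = (π (i, i)).2 := by
    intro i
    have h := cntS_aut π hπF {(i, i)}
    rw [Finset.image_singleton, cnt_single, cnt_single] at h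
    exact CN1_uniq _ (sorted_map π hfix _ (le_refl i)) (by rw [h]; exact CN1_diag i)
  set t : Fin 4 → Fin 4 := fun i => (π (i, i)).1 with htdef
  have ht : ∀ i, π (i, i) = (t i, t i) := fun i => Prod.ext_iff.mpr ⟨rfl, (hdiag i).symm⟩
  have tinj : Function.Injective t := by
    intro i j hij
    have h1 : π (i, i) = π (j, j) := by rw [ht i, ht j, hij]
    have h2 := π.injective h1
    exact congrArg Prod.fst h2
  set τ : Equiv.Perm (Fin 4) :=
    Equiv.ofBijective t ((Fintype.bijective_iff_injective_and_card t).mpr ⟨tinj, rfl⟩)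
    with hτdef
  rcases Int.units_eq_one_or (Equiv.Perm.sign τ) with hs | hs
  · -- τ is even
    have hςs : Equiv.Perm.sign τ⁻¹ = 1 := by rw [map_inv, hs, inv_one]
    set ρ : Equiv.Perm V4 := π * actE τ⁻¹ with hρdef
    have hρmem := mul_mem hπ (actE_mem τ⁻¹ hςs)
    have hfixρ : ∀ v : V4, ¬ v.1 ≤ v.2 → ρ v = v := (mem_autRel'.mp hρmem).1
    have hρF := aut_F48F hρmem
    have hdiagρ : ∀ i : Fin 4, ρ (i, i) = (⇑(τ * τ⁻¹) i, ⇑(τ * τ⁻¹) i) := by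
      intro i
      show π (actE τ⁻¹ (i, i)) = _
      rw [show actE τ⁻¹ (i, i) = (τ⁻¹ i, τ⁻¹ i) from actF_diag τ⁻¹ i, ht (τ⁻¹ i)]
      rfl
    have hρ1 : ρ = 1 := by
      apply Equiv.ext
      intro v
      show ρ v = v
      by_cases hle : v.1 ≤ v.2
      · by_cases hne : v.1 = v.2
        · have hv : v = (v.1, v.1) := Prod.ext_iff.mpr ⟨rfl, hne.symm⟩
          rw [hv, hdiagρ, mul_inv_cancel]
          rfl
        · have hod := offdiag_det ρ hρF hfixρ ⇑(τ * τ⁻¹) (τ * τ⁻¹).injective hdiagρ v hle hne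
          rw [mul_inv_cancel] at hod
          simp only [Equiv.Perm.coe_one, id_eq] at hod
          rwa [Prod.mk.eta, sortPair_of_le hle] at hod
      · exact hfixρ v hle
    have h3 : actE τ * actE τ⁻¹ = 1 := by rw [actE_mul, mul_inv_cancel, actE_one]
    have h4 : π = actE τ := mul_right_cancel (hρ1.trans h3.symm)
    exact ⟨⟨τ, Equiv.Perm.mem_alternatingGroup.mpr hs⟩, Subtype.ext h4.symm⟩
  · -- τ is odd : contradiction
    exfalso
    set ς : Equiv.Perm (Fin 4) := τ⁻¹ * Equiv.swap 0 1 with hςdef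
    have hςs : Equiv.Perm.sign ς = 1 := by
      rw [hςdef, map_mul, map_inv, hs, Equiv.Perm.sign_swap (show (0 : Fin 4) ≠ 1 by decide)]
      decide
    set ρ : Equiv.Perm V4 := π * actE ς with hρdef
    have hρmem := mul_mem hπ (actE_mem ς hςs)
    have hfixρ : ∀ v : V4, ¬ v.1 ≤ v.2 → ρ v = v := (mem_autRel'.mp hρmem).1
    have hρF := aut_F48F hρmem
    have hdiagρ : ∀ i : Fin 4, ρ (i, i) = (⇑(τ * ς) i, ⇑(τ * ς) i) := by
      intro i
      show π (actE ς (i, i)) = _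
      rw [show actE ς (i, i) = (ς i, ς i) from actF_diag ς i, ht (ς i)]
      rfl
    have hswap : τ * ς = Equiv.swap 0 1 := mul_inv_cancel_left τ (Equiv.swap 0 1)
    simp only [hswap] at hdiagρ
    have h00 : ρ (x 0 0) = x 1 1 := by
      rw [show (x 0 0) = ((0 : Fin 4), (0 : Fin 4)) from rfl, hdiagρ]
      decide
    have h11 : ρ (x 1 1) = x 0 0 := by
      rw [show (x 1 1) = ((1 : Fin 4), (1 : Fin 4)) from rfl, hdiagρ]
      decide
    have h01 : ρ (x 0 1) = x 0 1 := by
      have h := offdiag_det ρ hρF hfixρ ⇑(Equiv.swap (0 : Fin 4) 1)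
        (Equiv.swap (0 : Fin 4) 1).injective hdiagρ (x 0 1) (by decide) (by decide)
      rwa [show sortPair (Equiv.swap (0 : Fin 4) 1 (x 0 1).1,
        Equiv.swap (0 : Fin 4) 1 (x 0 1).2) = x 0 1 from by decide] at h
    have h03 : ρ (x 0 3) = x 1 3 := by
      have h := offdiag_det ρ hρF hfixρ ⇑(Equiv.swap (0 : Fin 4) 1)
        (Equiv.swap (0 : Fin 4) 1).injective hdiagρ (x 0 3) (by decide) (by decide)
      rwa [show sortPair (Equiv.swap (0 : Fin 4) 1 (x 0 3).1,
        Equiv.swap (0 : Fin 4) 1 (x 0 3).2) = x 1 3 from by decide] at h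
    have h23 : ρ (x 2 3) = x 2 3 := by
      have h := offdiag_det ρ hρF hfixρ ⇑(Equiv.swap (0 : Fin 4) 1)
        (Equiv.swap (0 : Fin 4) 1).injective hdiagρ (x 2 3) (by decide) (by decide)
      rwa [show sortPair (Equiv.swap (0 : Fin 4) 1 (x 2 3).1,
        Equiv.swap (0 : Fin 4) 1 (x 2 3).2) = x 2 3 from by decide] at h
    have hF0 : ({x 0 0, x 0 1, x 0 3, x 1 1, x 2 3} : Finset V4) ∈ F48F := by
      rw [mem_F48F,
        show maskF ({x 0 0, x 0 1, x 0 3, x 1 1, x 2 3} : Finset V4) = 2091 from by decide]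
      decide
    have hbad := (hρF _).mp hF0
    have himg : ({x 0 0, x 0 1, x 0 3, x 1 1, x 2 3} : Finset V4).image ⇑ρ =
        ({x 1 1, x 0 1, x 1 3, x 0 0, x 2 3} : Finset V4) := by
      rw [Finset.image_insert, Finset.image_insert, Finset.image_insert,
        Finset.image_insert, Finset.image_singleton, h00, h01, h03, h11, h23]
    rw [himg, mem_F48F,
      show maskF ({x 1 1, x 0 1, x 1 3, x 0 0, x 2 3} : Finset V4) = 2211 from by decide]
      at hbad
    exact absurd hbad (by decide)

end CP2Main


/-- the full automorphism group of `CP²₁₀` (permutations of its 10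
vertices carrying facets to facets) is isomorphic to `A₄`; it has exactly 12
elements. -/
theorem stmt_6 :
    Nonempty ((autRel facets10 {p : V4 | ¬ p.1 ≤ p.2}) ≃* alternatingGroup (Fin 4)) ∧
    Nat.card (autRel facets10 {p : V4 | ¬ p.1 ≤ p.2}) = 12 := by
  have hb : Function.Bijective φA := ⟨φA_inj, φA_surj⟩
  have e := MulEquiv.ofBijective φA hb
  refine ⟨⟨e.symm⟩, ?_⟩
  have hcard : Nat.card (autRel facets10 {p : V4 | ¬ p.1 ≤ p.2}) =
      Nat.card (alternatingGroup (Fin 4)) := Nat.card_congr e.symm.toEquiv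
  have h2 := two_mul_card_alternatingGroup (α := Fin 4)
  rw [Fintype.card_perm, Fintype.card_fin] at h2
  have h3 : Nat.card (alternatingGroup (Fin 4)) =
      Fintype.card (alternatingGroup (Fin 4)) := Nat.card_eq_fintype_card
  have h4 : Nat.factorial 4 = 24 := by decide
  rw [h4] at h2
  omega
end

section
/- The 12-vertex complex (S^2 × S^2)_12 on the vertices x_{ij} (1 ≤ i ≠ j ≤ 4), generated under the group ⟨g, h⟩ with g = (x_{12} x_{21} x_{24} x_{42} x_{14} x_{41} x_{43} x_{34} x_{13} x_{31} x_{32} x_{23}) and h = (x_{12} x_{14} x_{21} x_{24} x_{31})(x_{13} x_{42} x_{43} x_{32} x_{34}) by the basic facets x_{12}x_{14}x_{21}x_{24}x_{31} (orbit length 12) and x_{12}x_{13}x_{14}x_{21}x_{31} (orbit length 60), has exactly 72 facets and face vector (12, 60, 160, 180, 72). -/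
open Finset

set_option maxRecDepth 20000
set_option maxHeartbeats 2000000

def listA : List (Finset V4) :=
  [{x 0 1, x 0 3, x 1 0, x 1 3, x 2 0},
   {x 1 0, x 1 3, x 2 1, x 3 0, x 3 1},
   {x 0 3, x 1 2, x 1 3, x 3 1, x 3 2},
   {x 1 3, x 2 0, x 2 3, x 3 0, x 3 2},
   {x 0 1, x 0 3, x 2 3, x 3 0, x 3 1},
   {x 1 0, x 1 2, x 2 0, x 2 1, x 3 2},
   {x 0 2, x 2 1, x 2 3, x 3 1, x 3 2},
   {x 0 1, x 0 2, x 2 0, x 2 1, x 3 0},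
   {x 0 2, x 0 3, x 1 0, x 3 0, x 3 2},
   {x 0 1, x 1 2, x 1 3, x 2 1, x 2 3},
   {x 0 2, x 0 3, x 1 2, x 2 0, x 2 3},
   {x 0 1, x 0 2, x 1 0, x 1 2, x 3 1}]

def wordsA : List (List Bool) :=
  [[],
   [false],
   [false, false],
   [true, false],
   [false, false, false],
   [true, false, false],
   [false, true, false],
   [true, true, false],
   [false, false, false, false],
   [false, true, false, false],
   [false, false, true, false],
   [false, false, true, false, false]]

def listB : List (Finset V4) :=
  [{x 0 1, x 0 2, x 0 3, x 1 0, x 2 0},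
   {x 1 0, x 1 3, x 2 0, x 2 1, x 3 0},
   {x 0 1, x 0 3, x 1 0, x 1 3, x 3 1},
   {x 1 2, x 1 3, x 2 1, x 3 1, x 3 2},
   {x 0 1, x 1 3, x 2 0, x 2 3, x 3 0},
   {x 0 3, x 1 0, x 1 3, x 3 0, x 3 1},
   {x 0 3, x 1 0, x 1 3, x 2 0, x 3 2},
   {x 0 1, x 0 3, x 1 2, x 2 3, x 3 1},
   {x 1 2, x 2 0, x 2 1, x 2 3, x 3 2},
   {x 0 2, x 1 0, x 2 1, x 3 1, x 3 2},
   {x 0 1, x 0 2, x 0 3, x 2 0, x 3 0},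
   {x 0 3, x 1 3, x 3 0, x 3 1, x 3 2},
   {x 1 0, x 1 3, x 2 0, x 3 0, x 3 2},
   {x 1 3, x 2 1, x 2 3, x 3 0, x 3 1},
   {x 0 1, x 1 0, x 1 3, x 2 0, x 2 1},
   {x 0 1, x 0 2, x 0 3, x 1 0, x 3 0},
   {x 0 2, x 0 3, x 1 0, x 1 2, x 3 2},
   {x 0 1, x 0 2, x 1 2, x 2 1, x 2 3},
   {x 0 3, x 1 2, x 1 3, x 2 0, x 2 3},
   {x 1 3, x 2 1, x 2 3, x 3 1, x 3 2},
   {x 1 0, x 2 0, x 2 1, x 3 0, x 3 2},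
   {x 0 1, x 0 3, x 1 0, x 3 0, x 3 1},
   {x 0 3, x 2 3, x 3 0, x 3 1, x 3 2},
   {x 0 1, x 1 3, x 2 0, x 2 1, x 3 0},
   {x 0 2, x 0 3, x 1 2, x 3 1, x 3 2},
   {x 0 2, x 2 0, x 2 3, x 3 0, x 3 2},
   {x 1 0, x 1 2, x 1 3, x 2 1, x 3 1},
   {x 0 1, x 0 3, x 1 3, x 2 0, x 2 3},
   {x 0 1, x 0 2, x 1 0, x 1 2, x 2 0},
   {x 0 2, x 0 3, x 1 2, x 2 3, x 3 1},
   {x 0 1, x 0 2, x 2 1, x 3 0, x 3 1},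
   {x 0 2, x 2 0, x 2 1, x 2 3, x 3 2},
   {x 1 2, x 1 3, x 2 1, x 2 3, x 3 2},
   {x 0 1, x 1 3, x 2 1, x 2 3, x 3 0},
   {x 0 3, x 1 0, x 1 3, x 3 0, x 3 2},
   {x 0 2, x 0 3, x 2 3, x 3 0, x 3 2},
   {x 0 2, x 1 0, x 2 1, x 3 0, x 3 2},
   {x 1 0, x 1 2, x 2 1, x 3 1, x 3 2},
   {x 0 1, x 0 3, x 2 0, x 2 3, x 3 0},
   {x 0 1, x 0 3, x 1 2, x 1 3, x 3 1},
   {x 1 2, x 1 3, x 2 0, x 2 3, x 3 2},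
   {x 0 2, x 1 0, x 2 1, x 3 0, x 3 1},
   {x 0 2, x 1 0, x 1 2, x 3 1, x 3 2},
   {x 0 3, x 1 0, x 1 2, x 2 0, x 3 2},
   {x 0 2, x 1 2, x 2 0, x 2 1, x 2 3},
   {x 0 1, x 0 2, x 2 1, x 2 3, x 3 1},
   {x 0 1, x 0 2, x 1 2, x 2 3, x 3 1},
   {x 0 2, x 0 3, x 2 0, x 2 3, x 3 0},
   {x 1 3, x 2 3, x 3 0, x 3 1, x 3 2},
   {x 0 1, x 0 3, x 1 2, x 1 3, x 2 3},
   {x 0 1, x 0 2, x 1 2, x 2 0, x 2 1},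
   {x 0 3, x 1 2, x 1 3, x 2 0, x 3 2},
   {x 0 1, x 1 0, x 1 2, x 1 3, x 2 1},
   {x 0 2, x 0 3, x 1 0, x 1 2, x 2 0},
   {x 0 2, x 0 3, x 2 3, x 3 1, x 3 2},
   {x 0 2, x 2 0, x 2 1, x 3 0, x 3 2},
   {x 0 1, x 0 2, x 1 0, x 3 0, x 3 1},
   {x 0 1, x 1 0, x 1 2, x 2 0, x 2 1},
   {x 0 1, x 2 1, x 2 3, x 3 0, x 3 1},
   {x 0 1, x 1 0, x 1 2, x 1 3, x 3 1}]

def wordsB : List (List Bool) :=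
  [[],
   [false],
   [true],
   [false, false],
   [true, false],
   [false, true],
   [true, true],
   [false, false, false],
   [true, false, false],
   [false, true, false],
   [true, true, false],
   [false, false, true],
   [true, false, true],
   [false, true, true],
   [true, true, true],
   [false, false, false, false],
   [true, false, false, false],
   [false, true, false, false],
   [false, false, true, false],
   [true, false, true, false],
   [false, true, true, false],
   [true, true, true, false],
   [false, false, false, true],
   [true, true, false, true],
   [false, false, true, true],
   [true, false, true, true],
   [false, true, true, true],
   [true, true, true, true],
   [false, false, true, false, false],
   [true, false, true, false, false],
   [false, false, false, true, false],
   [true, true, false, true, false],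
   [false, false, true, true, false],
   [true, false, true, true, false],
   [false, true, true, true, false],
   [false, false, false, false, true],
   [true, false, false, false, true],
   [false, true, true, false, true],
   [true, true, true, false, true],
   [false, false, true, true, true],
   [true, false, true, true, true],
   [false, true, true, true, true],
   [true, true, false, true, false, false],
   [false, false, false, false, true, false],
   [false, true, true, false, true, false],
   [true, true, true, false, true, false],
   [false, false, false, true, true, false],
   [true, true, false, true, true, false],
   [false, false, true, true, true, false],
   [false, false, true, true, false, true],
   [true, true, false, true, true, true],
   [false, false, true, true, true, true],
   [true, false, false, false, false, true, false],
   [false, true, true, true, false, true, false],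
   [true, true, true, true, false, true, false],
   [false, true, true, false, true, true, false],
   [true, true, true, false, true, true, false],
   [false, true, true, false, true, true, true],
   [false, false, false, true, true, true, true],
   [false, true, false, false, false, false, true, false]]

def listF0 : List (Finset V4) :=
  [{x 0 1},
   {x 0 2},
   {x 0 3},
   {x 1 0},
   {x 1 2},
   {x 1 3},
   {x 2 0},
   {x 2 1},
   {x 2 3},
   {x 3 0},
   {x 3 1},
   {x 3 2}]

def encF0 : List Nat :=
  [2, 4, 8, 16, 64, 128, 256, 512, 2048, 4096, 8192, 16384]

def listF1 : List (Finset V4) :=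
  [{x 0 1, x 0 2},
   {x 0 1, x 0 3},
   {x 0 2, x 0 3},
   {x 0 1, x 1 0},
   {x 0 2, x 1 0},
   {x 0 3, x 1 0},
   {x 0 1, x 1 2},
   {x 0 2, x 1 2},
   {x 0 3, x 1 2},
   {x 1 0, x 1 2},
   {x 0 1, x 1 3},
   {x 0 3, x 1 3},
   {x 1 0, x 1 3},
   {x 1 2, x 1 3},
   {x 0 1, x 2 0},
   {x 0 2, x 2 0},
   {x 0 3, x 2 0},
   {x 1 0, x 2 0},
   {x 1 2, x 2 0},
   {x 1 3, x 2 0},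
   {x 0 1, x 2 1},
   {x 0 2, x 2 1},
   {x 1 0, x 2 1},
   {x 1 2, x 2 1},
   {x 1 3, x 2 1},
   {x 2 0, x 2 1},
   {x 0 1, x 2 3},
   {x 0 2, x 2 3},
   {x 0 3, x 2 3},
   {x 1 2, x 2 3},
   {x 1 3, x 2 3},
   {x 2 0, x 2 3},
   {x 2 1, x 2 3},
   {x 0 1, x 3 0},
   {x 0 2, x 3 0},
   {x 0 3, x 3 0},
   {x 1 0, x 3 0},
   {x 1 3, x 3 0},
   {x 2 0, x 3 0},
   {x 2 1, x 3 0},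
   {x 2 3, x 3 0},
   {x 0 1, x 3 1},
   {x 0 2, x 3 1},
   {x 0 3, x 3 1},
   {x 1 0, x 3 1},
   {x 1 2, x 3 1},
   {x 1 3, x 3 1},
   {x 2 1, x 3 1},
   {x 2 3, x 3 1},
   {x 3 0, x 3 1},
   {x 0 2, x 3 2},
   {x 0 3, x 3 2},
   {x 1 0, x 3 2},
   {x 1 2, x 3 2},
   {x 1 3, x 3 2},
   {x 2 0, x 3 2},
   {x 2 1, x 3 2},
   {x 2 3, x 3 2},
   {x 3 0, x 3 2},
   {x 3 1, x 3 2}]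

def encF1 : List Nat :=
  [6, 10, 12, 18, 20, 24, 66, 68, 72, 80, 130, 136, 144, 192, 258, 260, 264, 272, 320, 384, 514, 516, 528, 576, 640, 768, 2050, 2052, 2056, 2112, 2176, 2304, 2560, 4098, 4100, 4104, 4112, 4224, 4352, 4608, 6144, 8194, 8196, 8200, 8208, 8256, 8320, 8704, 10240, 12288, 16388, 16392, 16400, 16448, 16512, 16640, 16896, 18432, 20480, 24576]

def listF2 : List (Finset V4) :=
  [{x 0 1, x 0 2, x 0 3},
   {x 0 1, x 0 2, x 1 0},
   {x 0 1, x 0 3, x 1 0},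
   {x 0 2, x 0 3, x 1 0},
   {x 0 1, x 0 2, x 1 2},
   {x 0 1, x 0 3, x 1 2},
   {x 0 2, x 0 3, x 1 2},
   {x 0 1, x 1 0, x 1 2},
   {x 0 2, x 1 0, x 1 2},
   {x 0 3, x 1 0, x 1 2},
   {x 0 1, x 0 3, x 1 3},
   {x 0 1, x 1 0, x 1 3},
   {x 0 3, x 1 0, x 1 3},
   {x 0 1, x 1 2, x 1 3},
   {x 0 3, x 1 2, x 1 3},
   {x 1 0, x 1 2, x 1 3},
   {x 0 1, x 0 2, x 2 0},
   {x 0 1, x 0 3, x 2 0},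
   {x 0 2, x 0 3, x 2 0},
   {x 0 1, x 1 0, x 2 0},
   {x 0 2, x 1 0, x 2 0},
   {x 0 3, x 1 0, x 2 0},
   {x 0 1, x 1 2, x 2 0},
   {x 0 2, x 1 2, x 2 0},
   {x 0 3, x 1 2, x 2 0},
   {x 1 0, x 1 2, x 2 0},
   {x 0 1, x 1 3, x 2 0},
   {x 0 3, x 1 3, x 2 0},
   {x 1 0, x 1 3, x 2 0},
   {x 1 2, x 1 3, x 2 0},
   {x 0 1, x 0 2, x 2 1},
   {x 0 1, x 1 0, x 2 1},
   {x 0 2, x 1 0, x 2 1},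
   {x 0 1, x 1 2, x 2 1},
   {x 0 2, x 1 2, x 2 1},
   {x 1 0, x 1 2, x 2 1},
   {x 0 1, x 1 3, x 2 1},
   {x 1 0, x 1 3, x 2 1},
   {x 1 2, x 1 3, x 2 1},
   {x 0 1, x 2 0, x 2 1},
   {x 0 2, x 2 0, x 2 1},
   {x 1 0, x 2 0, x 2 1},
   {x 1 2, x 2 0, x 2 1},
   {x 1 3, x 2 0, x 2 1},
   {x 0 1, x 0 2, x 2 3},
   {x 0 1, x 0 3, x 2 3},
   {x 0 2, x 0 3, x 2 3},
   {x 0 1, x 1 2, x 2 3},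
   {x 0 2, x 1 2, x 2 3},
   {x 0 3, x 1 2, x 2 3},
   {x 0 1, x 1 3, x 2 3},
   {x 0 3, x 1 3, x 2 3},
   {x 1 2, x 1 3, x 2 3},
   {x 0 1, x 2 0, x 2 3},
   {x 0 2, x 2 0, x 2 3},
   {x 0 3, x 2 0, x 2 3},
   {x 1 2, x 2 0, x 2 3},
   {x 1 3, x 2 0, x 2 3},
   {x 0 1, x 2 1, x 2 3},
   {x 0 2, x 2 1, x 2 3},
   {x 1 2, x 2 1, x 2 3},
   {x 1 3, x 2 1, x 2 3},
   {x 2 0, x 2 1, x 2 3},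
   {x 0 1, x 0 2, x 3 0},
   {x 0 1, x 0 3, x 3 0},
   {x 0 2, x 0 3, x 3 0},
   {x 0 1, x 1 0, x 3 0},
   {x 0 2, x 1 0, x 3 0},
   {x 0 3, x 1 0, x 3 0},
   {x 0 1, x 1 3, x 3 0},
   {x 0 3, x 1 3, x 3 0},
   {x 1 0, x 1 3, x 3 0},
   {x 0 1, x 2 0, x 3 0},
   {x 0 2, x 2 0, x 3 0},
   {x 0 3, x 2 0, x 3 0},
   {x 1 0, x 2 0, x 3 0},
   {x 1 3, x 2 0, x 3 0},
   {x 0 1, x 2 1, x 3 0},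
   {x 0 2, x 2 1, x 3 0},
   {x 1 0, x 2 1, x 3 0},
   {x 1 3, x 2 1, x 3 0},
   {x 2 0, x 2 1, x 3 0},
   {x 0 1, x 2 3, x 3 0},
   {x 0 2, x 2 3, x 3 0},
   {x 0 3, x 2 3, x 3 0},
   {x 1 3, x 2 3, x 3 0},
   {x 2 0, x 2 3, x 3 0},
   {x 2 1, x 2 3, x 3 0},
   {x 0 1, x 0 2, x 3 1},
   {x 0 1, x 0 3, x 3 1},
   {x 0 2, x 0 3, x 3 1},
   {x 0 1, x 1 0, x 3 1},
   {x 0 2, x 1 0, x 3 1},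
   {x 0 3, x 1 0, x 3 1},
   {x 0 1, x 1 2, x 3 1},
   {x 0 2, x 1 2, x 3 1},
   {x 0 3, x 1 2, x 3 1},
   {x 1 0, x 1 2, x 3 1},
   {x 0 1, x 1 3, x 3 1},
   {x 0 3, x 1 3, x 3 1},
   {x 1 0, x 1 3, x 3 1},
   {x 1 2, x 1 3, x 3 1},
   {x 0 1, x 2 1, x 3 1},
   {x 0 2, x 2 1, x 3 1},
   {x 1 0, x 2 1, x 3 1},
   {x 1 2, x 2 1, x 3 1},
   {x 1 3, x 2 1, x 3 1},
   {x 0 1, x 2 3, x 3 1},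
   {x 0 2, x 2 3, x 3 1},
   {x 0 3, x 2 3, x 3 1},
   {x 1 2, x 2 3, x 3 1},
   {x 1 3, x 2 3, x 3 1},
   {x 2 1, x 2 3, x 3 1},
   {x 0 1, x 3 0, x 3 1},
   {x 0 2, x 3 0, x 3 1},
   {x 0 3, x 3 0, x 3 1},
   {x 1 0, x 3 0, x 3 1},
   {x 1 3, x 3 0, x 3 1},
   {x 2 1, x 3 0, x 3 1},
   {x 2 3, x 3 0, x 3 1},
   {x 0 2, x 0 3, x 3 2},
   {x 0 2, x 1 0, x 3 2},
   {x 0 3, x 1 0, x 3 2},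
   {x 0 2, x 1 2, x 3 2},
   {x 0 3, x 1 2, x 3 2},
   {x 1 0, x 1 2, x 3 2},
   {x 0 3, x 1 3, x 3 2},
   {x 1 0, x 1 3, x 3 2},
   {x 1 2, x 1 3, x 3 2},
   {x 0 2, x 2 0, x 3 2},
   {x 0 3, x 2 0, x 3 2},
   {x 1 0, x 2 0, x 3 2},
   {x 1 2, x 2 0, x 3 2},
   {x 1 3, x 2 0, x 3 2},
   {x 0 2, x 2 1, x 3 2},
   {x 1 0, x 2 1, x 3 2},
   {x 1 2, x 2 1, x 3 2},
   {x 1 3, x 2 1, x 3 2},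
   {x 2 0, x 2 1, x 3 2},
   {x 0 2, x 2 3, x 3 2},
   {x 0 3, x 2 3, x 3 2},
   {x 1 2, x 2 3, x 3 2},
   {x 1 3, x 2 3, x 3 2},
   {x 2 0, x 2 3, x 3 2},
   {x 2 1, x 2 3, x 3 2},
   {x 0 2, x 3 0, x 3 2},
   {x 0 3, x 3 0, x 3 2},
   {x 1 0, x 3 0, x 3 2},
   {x 1 3, x 3 0, x 3 2},
   {x 2 0, x 3 0, x 3 2},
   {x 2 1, x 3 0, x 3 2},
   {x 2 3, x 3 0, x 3 2},
   {x 0 2, x 3 1, x 3 2},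
   {x 0 3, x 3 1, x 3 2},
   {x 1 0, x 3 1, x 3 2},
   {x 1 2, x 3 1, x 3 2},
   {x 1 3, x 3 1, x 3 2},
   {x 2 1, x 3 1, x 3 2},
   {x 2 3, x 3 1, x 3 2},
   {x 3 0, x 3 1, x 3 2}]

def encF2 : List Nat :=
  [14, 22, 26, 28, 70, 74, 76, 82, 84, 88, 138, 146, 152, 194, 200, 208, 262, 266, 268, 274, 276, 280, 322, 324, 328, 336, 386, 392, 400, 448, 518, 530, 532, 578, 580, 592, 642, 656, 704, 770, 772, 784, 832, 896, 2054, 2058, 2060, 2114, 2116, 2120, 2178, 2184, 2240, 2306, 2308, 2312, 2368, 2432, 2562, 2564, 2624, 2688, 2816, 4102, 4106, 4108, 4114, 4116, 4120, 4226, 4232, 4240, 4354, 4356, 4360, 4368, 4480, 4610, 4612, 4624, 4736, 4864, 6146, 6148, 6152, 6272, 6400, 6656, 8198, 8202, 8204, 8210, 8212, 8216, 8258, 8260, 8264, 8272, 8322, 8328, 8336, 8384, 8706, 8708, 8720, 8768, 8832, 10242, 10244, 10248, 10304, 10368, 10752, 12290, 12292, 12296, 12304, 12416, 12800, 14336, 16396,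 16404, 16408, 16452, 16456, 16464, 16520, 16528, 16576, 16644, 16648, 16656, 16704, 16768, 16900, 16912, 16960, 17024, 17152, 18436, 18440, 18496, 18560, 18688, 18944, 20484, 20488, 20496, 20608, 20736, 20992, 22528, 24580, 24584, 24592, 24640, 24704, 25088, 26624, 28672]

def listF3 : List (Finset V4) :=
  [{x 0 1, x 0 2, x 0 3, x 1 0},
   {x 0 1, x 0 2, x 1 0, x 1 2},
   {x 0 2, x 0 3, x 1 0, x 1 2},
   {x 0 1, x 0 3, x 1 0, x 1 3},
   {x 0 1, x 0 3, x 1 2, x 1 3},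
   {x 0 1, x 1 0, x 1 2, x 1 3},
   {x 0 1, x 0 2, x 0 3, x 2 0},
   {x 0 1, x 0 2, x 1 0, x 2 0},
   {x 0 1, x 0 3, x 1 0, x 2 0},
   {x 0 2, x 0 3, x 1 0, x 2 0},
   {x 0 1, x 0 2, x 1 2, x 2 0},
   {x 0 2, x 0 3, x 1 2, x 2 0},
   {x 0 1, x 1 0, x 1 2, x 2 0},
   {x 0 2, x 1 0, x 1 2, x 2 0},
   {x 0 3, x 1 0, x 1 2, x 2 0},
   {x 0 1, x 0 3, x 1 3, x 2 0},
   {x 0 1, x 1 0, x 1 3, x 2 0},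
   {x 0 3, x 1 0, x 1 3, x 2 0},
   {x 0 3, x 1 2, x 1 3, x 2 0},
   {x 0 1, x 0 2, x 1 2, x 2 1},
   {x 0 1, x 1 0, x 1 2, x 2 1},
   {x 0 1, x 1 0, x 1 3, x 2 1},
   {x 0 1, x 1 2, x 1 3, x 2 1},
   {x 1 0, x 1 2, x 1 3, x 2 1},
   {x 0 1, x 0 2, x 2 0, x 2 1},
   {x 0 1, x 1 0, x 2 0, x 2 1},
   {x 0 1, x 1 2, x 2 0, x 2 1},
   {x 0 2, x 1 2, x 2 0, x 2 1},
   {x 1 0, x 1 2, x 2 0, x 2 1},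
   {x 0 1, x 1 3, x 2 0, x 2 1},
   {x 1 0, x 1 3, x 2 0, x 2 1},
   {x 0 1, x 0 2, x 1 2, x 2 3},
   {x 0 1, x 0 3, x 1 2, x 2 3},
   {x 0 2, x 0 3, x 1 2, x 2 3},
   {x 0 1, x 0 3, x 1 3, x 2 3},
   {x 0 1, x 1 2, x 1 3, x 2 3},
   {x 0 3, x 1 2, x 1 3, x 2 3},
   {x 0 1, x 0 3, x 2 0, x 2 3},
   {x 0 2, x 0 3, x 2 0, x 2 3},
   {x 0 2, x 1 2, x 2 0, x 2 3},
   {x 0 3, x 1 2, x 2 0, x 2 3},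
   {x 0 1, x 1 3, x 2 0, x 2 3},
   {x 0 3, x 1 3, x 2 0, x 2 3},
   {x 1 2, x 1 3, x 2 0, x 2 3},
   {x 0 1, x 0 2, x 2 1, x 2 3},
   {x 0 1, x 1 2, x 2 1, x 2 3},
   {x 0 2, x 1 2, x 2 1, x 2 3},
   {x 0 1, x 1 3, x 2 1, x 2 3},
   {x 1 2, x 1 3, x 2 1, x 2 3},
   {x 0 2, x 2 0, x 2 1, x 2 3},
   {x 1 2, x 2 0, x 2 1, x 2 3},
   {x 0 1, x 0 2, x 0 3, x 3 0},
   {x 0 1, x 0 2, x 1 0, x 3 0},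
   {x 0 1, x 0 3, x 1 0, x 3 0},
   {x 0 2, x 0 3, x 1 0, x 3 0},
   {x 0 3, x 1 0, x 1 3, x 3 0},
   {x 0 1, x 0 2, x 2 0, x 3 0},
   {x 0 1, x 0 3, x 2 0, x 3 0},
   {x 0 2, x 0 3, x 2 0, x 3 0},
   {x 0 1, x 1 3, x 2 0, x 3 0},
   {x 1 0, x 1 3, x 2 0, x 3 0},
   {x 0 1, x 0 2, x 2 1, x 3 0},
   {x 0 2, x 1 0, x 2 1, x 3 0},
   {x 0 1, x 1 3, x 2 1, x 3 0},
   {x 1 0, x 1 3, x 2 1, x 3 0},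
   {x 0 1, x 2 0, x 2 1, x 3 0},
   {x 0 2, x 2 0, x 2 1, x 3 0},
   {x 1 0, x 2 0, x 2 1, x 3 0},
   {x 1 3, x 2 0, x 2 1, x 3 0},
   {x 0 1, x 0 3, x 2 3, x 3 0},
   {x 0 2, x 0 3, x 2 3, x 3 0},
   {x 0 1, x 1 3, x 2 3, x 3 0},
   {x 0 1, x 2 0, x 2 3, x 3 0},
   {x 0 2, x 2 0, x 2 3, x 3 0},
   {x 0 3, x 2 0, x 2 3, x 3 0},
   {x 1 3, x 2 0, x 2 3, x 3 0},
   {x 0 1, x 2 1, x 2 3, x 3 0},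
   {x 1 3, x 2 1, x 2 3, x 3 0},
   {x 0 1, x 0 2, x 1 0, x 3 1},
   {x 0 1, x 0 3, x 1 0, x 3 1},
   {x 0 1, x 0 2, x 1 2, x 3 1},
   {x 0 1, x 0 3, x 1 2, x 3 1},
   {x 0 2, x 0 3, x 1 2, x 3 1},
   {x 0 1, x 1 0, x 1 2, x 3 1},
   {x 0 2, x 1 0, x 1 2, x 3 1},
   {x 0 1, x 0 3, x 1 3, x 3 1},
   {x 0 1, x 1 0, x 1 3, x 3 1},
   {x 0 3, x 1 0, x 1 3, x 3 1},
   {x 0 1, x 1 2, x 1 3, x 3 1},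
   {x 0 3, x 1 2, x 1 3, x 3 1},
   {x 1 0, x 1 2, x 1 3, x 3 1},
   {x 0 1, x 0 2, x 2 1, x 3 1},
   {x 0 2, x 1 0, x 2 1, x 3 1},
   {x 1 0, x 1 2, x 2 1, x 3 1},
   {x 1 0, x 1 3, x 2 1, x 3 1},
   {x 1 2, x 1 3, x 2 1, x 3 1},
   {x 0 1, x 0 2, x 2 3, x 3 1},
   {x 0 1, x 0 3, x 2 3, x 3 1},
   {x 0 2, x 0 3, x 2 3, x 3 1},
   {x 0 1, x 1 2, x 2 3, x 3 1},
   {x 0 2, x 1 2, x 2 3, x 3 1},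
   {x 0 3, x 1 2, x 2 3, x 3 1},
   {x 0 1, x 2 1, x 2 3, x 3 1},
   {x 0 2, x 2 1, x 2 3, x 3 1},
   {x 1 3, x 2 1, x 2 3, x 3 1},
   {x 0 1, x 0 2, x 3 0, x 3 1},
   {x 0 1, x 0 3, x 3 0, x 3 1},
   {x 0 1, x 1 0, x 3 0, x 3 1},
   {x 0 2, x 1 0, x 3 0, x 3 1},
   {x 0 3, x 1 0, x 3 0, x 3 1},
   {x 0 3, x 1 3, x 3 0, x 3 1},
   {x 1 0, x 1 3, x 3 0, x 3 1},
   {x 0 1, x 2 1, x 3 0, x 3 1},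
   {x 0 2, x 2 1, x 3 0, x 3 1},
   {x 1 0, x 2 1, x 3 0, x 3 1},
   {x 1 3, x 2 1, x 3 0, x 3 1},
   {x 0 1, x 2 3, x 3 0, x 3 1},
   {x 0 3, x 2 3, x 3 0, x 3 1},
   {x 1 3, x 2 3, x 3 0, x 3 1},
   {x 2 1, x 2 3, x 3 0, x 3 1},
   {x 0 2, x 0 3, x 1 0, x 3 2},
   {x 0 2, x 0 3, x 1 2, x 3 2},
   {x 0 2, x 1 0, x 1 2, x 3 2},
   {x 0 3, x 1 0, x 1 2, x 3 2},
   {x 0 3, x 1 0, x 1 3, x 3 2},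
   {x 0 3, x 1 2, x 1 3, x 3 2},
   {x 0 3, x 1 0, x 2 0, x 3 2},
   {x 0 3, x 1 2, x 2 0, x 3 2},
   {x 1 0, x 1 2, x 2 0, x 3 2},
   {x 0 3, x 1 3, x 2 0, x 3 2},
   {x 1 0, x 1 3, x 2 0, x 3 2},
   {x 1 2, x 1 3, x 2 0, x 3 2},
   {x 0 2, x 1 0, x 2 1, x 3 2},
   {x 1 0, x 1 2, x 2 1, x 3 2},
   {x 1 2, x 1 3, x 2 1, x 3 2},
   {x 0 2, x 2 0, x 2 1, x 3 2},
   {x 1 0, x 2 0, x 2 1, x 3 2},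
   {x 1 2, x 2 0, x 2 1, x 3 2},
   {x 0 2, x 0 3, x 2 3, x 3 2},
   {x 1 2, x 1 3, x 2 3, x 3 2},
   {x 0 2, x 2 0, x 2 3, x 3 2},
   {x 1 2, x 2 0, x 2 3, x 3 2},
   {x 1 3, x 2 0, x 2 3, x 3 2},
   {x 0 2, x 2 1, x 2 3, x 3 2},
   {x 1 2, x 2 1, x 2 3, x 3 2},
   {x 1 3, x 2 1, x 2 3, x 3 2},
   {x 2 0, x 2 1, x 2 3, x 3 2},
   {x 0 2, x 0 3, x 3 0, x 3 2},
   {x 0 2, x 1 0, x 3 0, x 3 2},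
   {x 0 3, x 1 0, x 3 0, x 3 2},
   {x 0 3, x 1 3, x 3 0, x 3 2},
   {x 1 0, x 1 3, x 3 0, x 3 2},
   {x 0 2, x 2 0, x 3 0, x 3 2},
   {x 1 0, x 2 0, x 3 0, x 3 2},
   {x 1 3, x 2 0, x 3 0, x 3 2},
   {x 0 2, x 2 1, x 3 0, x 3 2},
   {x 1 0, x 2 1, x 3 0, x 3 2},
   {x 2 0, x 2 1, x 3 0, x 3 2},
   {x 0 2, x 2 3, x 3 0, x 3 2},
   {x 0 3, x 2 3, x 3 0, x 3 2},
   {x 1 3, x 2 3, x 3 0, x 3 2},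
   {x 2 0, x 2 3, x 3 0, x 3 2},
   {x 0 2, x 0 3, x 3 1, x 3 2},
   {x 0 2, x 1 0, x 3 1, x 3 2},
   {x 0 2, x 1 2, x 3 1, x 3 2},
   {x 0 3, x 1 2, x 3 1, x 3 2},
   {x 1 0, x 1 2, x 3 1, x 3 2},
   {x 0 3, x 1 3, x 3 1, x 3 2},
   {x 1 2, x 1 3, x 3 1, x 3 2},
   {x 0 2, x 2 1, x 3 1, x 3 2},
   {x 1 0, x 2 1, x 3 1, x 3 2},
   {x 1 2, x 2 1, x 3 1, x 3 2},
   {x 1 3, x 2 1, x 3 1, x 3 2},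
   {x 0 2, x 2 3, x 3 1, x 3 2},
   {x 0 3, x 2 3, x 3 1, x 3 2},
   {x 1 3, x 2 3, x 3 1, x 3 2},
   {x 2 1, x 2 3, x 3 1, x 3 2},
   {x 0 3, x 3 0, x 3 1, x 3 2},
   {x 1 3, x 3 0, x 3 1, x 3 2},
   {x 2 3, x 3 0, x 3 1, x 3 2}]

def encF3 : List Nat :=
  [30, 86, 92, 154, 202, 210, 270, 278, 282, 284, 326, 332, 338, 340, 344, 394, 402, 408, 456, 582, 594, 658, 706, 720, 774, 786, 834, 836, 848, 898, 912, 2118, 2122, 2124, 2186, 2242, 2248, 2314, 2316, 2372, 2376, 2434, 2440, 2496, 2566, 2626, 2628, 2690, 2752, 2820, 2880, 4110, 4118, 4122, 4124, 4248, 4358, 4362, 4364, 4482, 4496, 4614, 4628, 4738, 4752, 4866, 4868, 4880, 4992, 6154, 6156, 6274, 6402, 6404, 6408, 6528, 6658, 6784, 8214, 8218, 8262, 8266, 8268, 8274, 8276, 8330, 8338, 8344, 8386, 8392, 8400, 8710, 8724, 8784, 8848, 8896, 10246, 10250, 10252, 10306, 10308, 10312, 10754, 10756, 10880, 12294, 12298,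 12306, 12308, 12312, 12424, 12432, 12802, 12804, 12816, 12928, 14338, 14344, 14464, 14848, 16412, 16460, 16468, 16472, 16536, 16584, 16664, 16712, 16720, 16776, 16784, 16832, 16916, 16976, 17088, 17156, 17168, 17216, 18444, 18624, 18692, 18752, 18816, 18948, 19008, 19072, 19200, 20492, 20500, 20504, 20616, 20624, 20740, 20752, 20864, 20996, 21008, 21248, 22532, 22536, 22656, 22784, 24588, 24596, 24644, 24648, 24656, 24712, 24768, 25092, 25104, 25152, 25216, 26628, 26632, 26752, 27136, 28680, 28800, 30720]

def listF4 : List (Finset V4) :=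
  [{x 0 1, x 0 2, x 0 3, x 1 0, x 2 0},
   {x 0 1, x 0 2, x 1 0, x 1 2, x 2 0},
   {x 0 2, x 0 3, x 1 0, x 1 2, x 2 0},
   {x 0 1, x 0 3, x 1 0, x 1 3, x 2 0},
   {x 0 1, x 1 0, x 1 2, x 1 3, x 2 1},
   {x 0 1, x 0 2, x 1 2, x 2 0, x 2 1},
   {x 0 1, x 1 0, x 1 2, x 2 0, x 2 1},
   {x 0 1, x 1 0, x 1 3, x 2 0, x 2 1},
   {x 0 1, x 0 3, x 1 2, x 1 3, x 2 3},
   {x 0 2, x 0 3, x 1 2, x 2 0, x 2 3},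
   {x 0 1, x 0 3, x 1 3, x 2 0, x 2 3},
   {x 0 3, x 1 2, x 1 3, x 2 0, x 2 3},
   {x 0 1, x 0 2, x 1 2, x 2 1, x 2 3},
   {x 0 1, x 1 2, x 1 3, x 2 1, x 2 3},
   {x 0 2, x 1 2, x 2 0, x 2 1, x 2 3},
   {x 0 1, x 0 2, x 0 3, x 1 0, x 3 0},
   {x 0 1, x 0 2, x 0 3, x 2 0, x 3 0},
   {x 0 1, x 0 2, x 2 0, x 2 1, x 3 0},
   {x 0 1, x 1 3, x 2 0, x 2 1, x 3 0},
   {x 1 0, x 1 3, x 2 0, x 2 1, x 3 0},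
   {x 0 1, x 0 3, x 2 0, x 2 3, x 3 0},
   {x 0 2, x 0 3, x 2 0, x 2 3, x 3 0},
   {x 0 1, x 1 3, x 2 0, x 2 3, x 3 0},
   {x 0 1, x 1 3, x 2 1, x 2 3, x 3 0},
   {x 0 1, x 0 2, x 1 0, x 1 2, x 3 1},
   {x 0 1, x 0 3, x 1 0, x 1 3, x 3 1},
   {x 0 1, x 0 3, x 1 2, x 1 3, x 3 1},
   {x 0 1, x 1 0, x 1 2, x 1 3, x 3 1},
   {x 1 0, x 1 2, x 1 3, x 2 1, x 3 1},
   {x 0 1, x 0 2, x 1 2, x 2 3, x 3 1},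
   {x 0 1, x 0 3, x 1 2, x 2 3, x 3 1},
   {x 0 2, x 0 3, x 1 2, x 2 3, x 3 1},
   {x 0 1, x 0 2, x 2 1, x 2 3, x 3 1},
   {x 0 1, x 0 2, x 1 0, x 3 0, x 3 1},
   {x 0 1, x 0 3, x 1 0, x 3 0, x 3 1},
   {x 0 3, x 1 0, x 1 3, x 3 0, x 3 1},
   {x 0 1, x 0 2, x 2 1, x 3 0, x 3 1},
   {x 0 2, x 1 0, x 2 1, x 3 0, x 3 1},
   {x 1 0, x 1 3, x 2 1, x 3 0, x 3 1},
   {x 0 1, x 0 3, x 2 3, x 3 0, x 3 1},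
   {x 0 1, x 2 1, x 2 3, x 3 0, x 3 1},
   {x 1 3, x 2 1, x 2 3, x 3 0, x 3 1},
   {x 0 2, x 0 3, x 1 0, x 1 2, x 3 2},
   {x 0 3, x 1 0, x 1 2, x 2 0, x 3 2},
   {x 0 3, x 1 0, x 1 3, x 2 0, x 3 2},
   {x 0 3, x 1 2, x 1 3, x 2 0, x 3 2},
   {x 1 0, x 1 2, x 2 0, x 2 1, x 3 2},
   {x 1 2, x 1 3, x 2 0, x 2 3, x 3 2},
   {x 1 2, x 1 3, x 2 1, x 2 3, x 3 2},
   {x 0 2, x 2 0, x 2 1, x 2 3, x 3 2},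
   {x 1 2, x 2 0, x 2 1, x 2 3, x 3 2},
   {x 0 2, x 0 3, x 1 0, x 3 0, x 3 2},
   {x 0 3, x 1 0, x 1 3, x 3 0, x 3 2},
   {x 1 0, x 1 3, x 2 0, x 3 0, x 3 2},
   {x 0 2, x 1 0, x 2 1, x 3 0, x 3 2},
   {x 0 2, x 2 0, x 2 1, x 3 0, x 3 2},
   {x 1 0, x 2 0, x 2 1, x 3 0, x 3 2},
   {x 0 2, x 0 3, x 2 3, x 3 0, x 3 2},
   {x 0 2, x 2 0, x 2 3, x 3 0, x 3 2},
   {x 1 3, x 2 0, x 2 3, x 3 0, x 3 2},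
   {x 0 2, x 0 3, x 1 2, x 3 1, x 3 2},
   {x 0 2, x 1 0, x 1 2, x 3 1, x 3 2},
   {x 0 3, x 1 2, x 1 3, x 3 1, x 3 2},
   {x 0 2, x 1 0, x 2 1, x 3 1, x 3 2},
   {x 1 0, x 1 2, x 2 1, x 3 1, x 3 2},
   {x 1 2, x 1 3, x 2 1, x 3 1, x 3 2},
   {x 0 2, x 0 3, x 2 3, x 3 1, x 3 2},
   {x 0 2, x 2 1, x 2 3, x 3 1, x 3 2},
   {x 1 3, x 2 1, x 2 3, x 3 1, x 3 2},
   {x 0 3, x 1 3, x 3 0, x 3 1, x 3 2},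
   {x 0 3, x 2 3, x 3 0, x 3 1, x 3 2},
   {x 1 3, x 2 3, x 3 0, x 3 1, x 3 2}]

def encF4 : List Nat :=
  [286, 342, 348, 410, 722, 838, 850, 914, 2250, 2380, 2442, 2504, 2630, 2754, 2884, 4126, 4366, 4870, 4994, 5008, 6410, 6412, 6530, 6786, 8278, 8346, 8394, 8402, 8912, 10310, 10314, 10316, 10758, 12310, 12314, 12440, 12806, 12820, 12944, 14346, 14850, 14976, 16476, 16728, 16792, 16840, 17232, 18880, 19136, 19204, 19264, 20508, 20632, 20880, 21012, 21252, 21264, 22540, 22788, 22912, 24652, 24660, 24776, 25108, 25168, 25280, 26636, 27140, 27264, 28808, 30728, 30848]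


def list72 : List (Finset V4) := listA ++ listB

def idxN : V4 → ℕ := fun p => p.1.val * 4 + p.2.val

def enc (A : Finset V4) : ℕ := ∑ i ∈ A.image idxN, 2 ^ i

lemma enc_inj : Function.Injective enc := by
  have h1 : Function.Injective idxN := by decide
  exact (Finset.geomSum_injective le_rfl).comp (Finset.image_injective h1)

lemma nodup72 : list72.Nodup := by
  have h : (list72.map enc).Nodup := by decide
  exact List.Nodup.of_map enc h

lemma nodupA : listA.Nodup := by
  have := nodup72
  rw [list72, List.nodup_append] at this
  exact this.1

lemma nodupB : listB.Nodup := by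
  have := nodup72
  rw [list72, List.nodup_append] at this
  exact this.2.1

def T72 : Finset (Finset V4) := ⟨↑list72, nodup72⟩
def TA : Finset (Finset V4) := ⟨↑listA, nodupA⟩
def TB : Finset (Finset V4) := ⟨↑listB, nodupB⟩

lemma memTA {F : Finset V4} : F ∈ TA ↔ F ∈ listA := Finset.mem_mk.trans Multiset.mem_coe
lemma memTB {F : Finset V4} : F ∈ TB ↔ F ∈ listB := Finset.mem_mk.trans Multiset.mem_coe
lemma memT72 {F : Finset V4} : F ∈ T72 ↔ F ∈ list72 := Finset.mem_mk.trans Multiset.mem_coe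

def evalW (w : List Bool) : Equiv.Perm V4 :=
  (w.map (fun b => if b then hPerm else gPerm)).prod

lemma evalW_mem (w : List Bool) : evalW w ∈ G12 := by
  induction w with
  | nil => exact Subgroup.one_mem _
  | cons b t ih =>
    have hb : (if b then hPerm else gPerm) ∈ G12 := by
      cases b
      · exact Subgroup.subset_closure (Or.inl rfl)
      · exact Subgroup.subset_closure (Or.inr rfl)
    simpa [evalW, List.prod_cons] using Subgroup.mul_mem _ hb ih

lemma inv_stable (π : Equiv.Perm V4) (T : Finset (Finset V4))
    (h : ∀ F ∈ T, F.image ⇑π ∈ T) : ∀ F ∈ T, F.image ⇑π⁻¹ ∈ T := by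
  have hinj : Function.Injective (fun F : Finset V4 => F.image ⇑π) :=
    Finset.image_injective π.injective
  have hS : T.image (fun F => F.image ⇑π) = T := by
    apply Finset.eq_of_subset_of_card_le
    · intro F hF
      obtain ⟨F', hF', rfl⟩ := Finset.mem_image.mp hF
      exact h F' hF'
    · rw [Finset.card_image_of_injective _ hinj]
  intro F hF
  rw [← hS] at hF
  obtain ⟨F', hF', hE⟩ := Finset.mem_image.mp hF
  have : F.image ⇑π⁻¹ = F' := by
    rw [← hE, Finset.image_image]
    have : (⇑π⁻¹ ∘ ⇑π) = id := by
      funext v; simp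
    rw [this, Finset.image_id]
  rw [this]; exact hF'

lemma stable (T : Finset (Finset V4))
    (hg : ∀ F ∈ T, F.image ⇑gPerm ∈ T) (hh : ∀ F ∈ T, F.image ⇑hPerm ∈ T) :
    ∀ π ∈ G12, ∀ F ∈ T, F.image ⇑π ∈ T := by
  intro π hπ
  refine Subgroup.closure_induction ?_ ?_ ?_ ?_ hπ
  · rintro x (rfl | rfl)
    · exact hg
    · exact hh
  · intro F hF; simpa using hF
  · intro a b _ _ hpa hpb F hF
    have h1 := hpa (F.image ⇑b) (hpb F hF)
    rw [Finset.image_image] at h1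
    exact h1
  · intro a _ hpa
    exact inv_stable a T hpa

lemma orbit_eq (A : Finset V4) (T : Finset (Finset V4)) (hA : A ∈ T)
    (hg : ∀ F ∈ T, F.image ⇑gPerm ∈ T) (hh : ∀ F ∈ T, F.image ⇑hPerm ∈ T)
    (hsub : ∀ F ∈ T, ∃ π ∈ G12, F = A.image ⇑π) :
    {F | ∃ π ∈ G12, F = A.image ⇑π} = ↑T := by
  ext F
  constructor
  · rintro ⟨π, hπ, rfl⟩
    exact stable T hg hh π hπ A hA
  · intro hF; exact hsub F hF

lemma mapA : wordsA.map (fun w => basic12A.image ⇑(evalW w)) = listA := by decide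

lemma mapB : wordsB.map (fun w => basic12B.image ⇑(evalW w)) = listB := by decide

lemma hsubA : ∀ F ∈ TA, ∃ π ∈ G12, F = basic12A.image ⇑π := by
  intro F hF
  have h : F ∈ listA := memTA.mp hF
  rw [← mapA] at h
  obtain ⟨w, _, he⟩ := List.mem_map.mp h
  exact ⟨evalW w, evalW_mem w, he.symm⟩

lemma hsubB : ∀ F ∈ TB, ∃ π ∈ G12, F = basic12B.image ⇑π := by
  intro F hF
  have h : F ∈ listB := memTB.mp hF
  rw [← mapB] at h
  obtain ⟨w, _, he⟩ := List.mem_map.mp h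
  exact ⟨evalW w, evalW_mem w, he.symm⟩

lemma inv_gA : ∀ F ∈ TA, F.image ⇑gPerm ∈ TA := by
  have h : (listA.all (fun F => listA.contains (F.image ⇑gPerm))) = true := by decide
  intro F hF
  exact memTA.mpr (List.mem_of_elem_eq_true (List.all_eq_true.mp h F (memTA.mp hF)))

lemma inv_hA : ∀ F ∈ TA, F.image ⇑hPerm ∈ TA := by
  have h : (listA.all (fun F => listA.contains (F.image ⇑hPerm))) = true := by decide
  intro F hF
  exact memTA.mpr (List.mem_of_elem_eq_true (List.all_eq_true.mp h F (memTA.mp hF)))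

lemma inv_gB : ∀ F ∈ TB, F.image ⇑gPerm ∈ TB := by
  have h : (listB.all (fun F => listB.contains (F.image ⇑gPerm))) = true := by decide
  intro F hF
  exact memTB.mpr (List.mem_of_elem_eq_true (List.all_eq_true.mp h F (memTB.mp hF)))

lemma inv_hB : ∀ F ∈ TB, F.image ⇑hPerm ∈ TB := by
  have h : (listB.all (fun F => listB.contains (F.image ⇑hPerm))) = true := by decide
  intro F hF
  exact memTB.mpr (List.mem_of_elem_eq_true (List.all_eq_true.mp h F (memTB.mp hF)))

lemma basicA_mem : basic12A ∈ TA := memTA.mpr (by decide)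

lemma basicB_mem : basic12B ∈ TB := memTB.mpr (by decide)

lemma orbitA_eq : {F | ∃ π ∈ G12, F = basic12A.image ⇑π} = ↑TA :=
  orbit_eq _ _ basicA_mem inv_gA inv_hA hsubA

lemma orbitB_eq : {F | ∃ π ∈ G12, F = basic12B.image ⇑π} = ↑TB :=
  orbit_eq _ _ basicB_mem inv_gB inv_hB hsubB

lemma facets12_eq : facets12 = ↑T72 := by
  have h : facets12 = {F | ∃ π ∈ G12, F = basic12A.image ⇑π} ∪
      {F | ∃ π ∈ G12, F = basic12B.image ⇑π} := by
    ext F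
    simp only [facets12, Set.mem_setOf_eq, Set.mem_union]
    constructor
    · rintro ⟨π, hπ, (h | h)⟩
      · exact Or.inl ⟨π, hπ, h⟩
      · exact Or.inr ⟨π, hπ, h⟩
    · rintro (⟨π, hπ, h⟩ | ⟨π, hπ, h⟩)
      · exact ⟨π, hπ, Or.inl h⟩
      · exact ⟨π, hπ, Or.inr h⟩
  rw [h, orbitA_eq, orbitB_eq]
  ext F
  simp only [Set.mem_union, Finset.coe_union, Finset.mem_coe, memTA, memTB, memT72,
    list72, List.mem_append]

def encM (s : Multiset V4) : ℕ := (s.map (fun p => 2 ^ idxN p)).sum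

lemma idxN_inj : Function.Injective idxN := by decide

lemma encM_val (A : Finset V4) : encM A.val = enc A := by
  rw [enc, Finset.sum_image (fun x _ y _ h => idxN_inj h)]
  rfl

lemma le_list_sum {l : List (Multiset ℕ)} {s : Multiset ℕ} (h : s ∈ l) : s ≤ l.sum := by
  induction l with
  | nil => cases h
  | cons a t ih =>
    rw [List.sum_cons]
    rcases List.mem_cons.mp h with h | h
    · subst h; exact Multiset.le_add_right _ _
    · exact le_trans (ih h) (Multiset.le_add_left _ _)

def bigM (k : ℕ) : Multiset ℕ :=
  (list72.map (fun F => (F.1.powersetCard (k + 1)).map encM)).sum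

lemma face_count (k N : ℕ) (listF : List (Finset V4)) (encF : List ℕ)
    (hmap : listF.map enc = encF)
    (hN : encF.length = N)
    (hnd : encF.Nodup)
    (h1 : (bigM k).countP (fun n => encF.contains n = true) = Multiset.card (bigM k))
    (h2 : (listF.all (fun A => decide (A.card = k + 1) &&
        list72.any (fun F => decide (A ⊆ F)))) = true) :
    fVec facets12 k = N := by
  have key : enc '' {A | A ∈ cFaces facets12 ∧ A.card = k + 1} = {n | n ∈ encF} := by
    ext n
    constructor
    · rintro ⟨A, ⟨⟨hne, F, hF, hAF⟩, hcard⟩, rfl⟩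
      rw [facets12_eq] at hF
      have hF72 : F ∈ list72 := memT72.mp hF
      have hle : A.val ∈ F.1.powersetCard (k + 1) :=
        Multiset.mem_powersetCard.mpr ⟨Finset.val_le_iff.mpr hAF, hcard⟩
      have hmem : encM A.val ∈ (F.1.powersetCard (k + 1)).map encM :=
        Multiset.mem_map_of_mem _ hle
      have hM : encM A.val ∈ bigM k :=
        Multiset.mem_of_le (le_list_sum (List.mem_map_of_mem hF72)) hmem
      have hp := (Multiset.countP_eq_card.mp h1) _ hM
      rw [← encM_val A]
      exact List.mem_of_elem_eq_true hp
    · intro hn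
      rw [← hmap] at hn
      obtain ⟨A, hA, rfl⟩ := List.mem_map.mp hn
      have h2A := List.all_eq_true.mp h2 A hA
      rw [Bool.and_eq_true] at h2A
      obtain ⟨hc, hex⟩ := h2A
      have hcard : A.card = k + 1 := of_decide_eq_true hc
      obtain ⟨F, hF, hsub⟩ := List.any_eq_true.mp hex
      refine ⟨A, ⟨⟨?_, F, ?_, of_decide_eq_true hsub⟩, hcard⟩, rfl⟩
      · exact Finset.card_pos.mp (by omega)
      · rw [facets12_eq]
        exact memT72.mpr hF
  have hset : {n | n ∈ encF} = ↑encF.toFinset := by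
    ext n; simp
  rw [fVec, ← Set.ncard_image_of_injective _ enc_inj, key, hset, Set.ncard_coe_finset,
    List.toFinset_card_of_nodup hnd, hN]

lemma fcount0 : fVec facets12 0 = 12 := by
  refine face_count 0 12 listF0 encF0 (by decide) (by decide) (by decide) (by decide) (by decide)

lemma fcount1 : fVec facets12 1 = 60 := by
  refine face_count 1 60 listF1 encF1 (by decide) (by decide) (by decide) (by decide) (by decide)

lemma fcount2 : fVec facets12 2 = 160 := by
  refine face_count 2 160 listF2 encF2 (by decide) (by decide) (by decide) (by decide) (by decide)

lemma fcount3 : fVec facets12 3 = 180 := by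
  refine face_count 3 180 listF3 encF3 (by decide) (by decide) (by decide) (by decide) (by decide)

lemma fcount4 : fVec facets12 4 = 72 := by
  refine face_count 4 72 listF4 encF4 (by decide) (by decide) (by decide) (by decide) (by decide)

/-- `(S² × S²)₁₂` has 72 facets (orbits of lengths 12 and 60 of
the two basic facets) and face vector (12, 60, 160, 180, 72). -/
theorem stmt_14 :
    Set.ncard {F | ∃ π ∈ G12, F = basic12A.image ⇑π} = 12 ∧
    Set.ncard {F | ∃ π ∈ G12, F = basic12B.image ⇑π} = 60 ∧
    Set.ncard facets12 = 72 ∧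
    fVec facets12 0 = 12 ∧ fVec facets12 1 = 60 ∧ fVec facets12 2 = 160 ∧
    fVec facets12 3 = 180 ∧ fVec facets12 4 = 72 := by
  refine ⟨?_, ?_, ?_, fcount0, fcount1, fcount2, fcount3, fcount4⟩
  · rw [orbitA_eq, Set.ncard_coe_finset]; rfl
  · rw [orbitB_eq, Set.ncard_coe_finset]; rfl
  · rw [facets12_eq, Set.ncard_coe_finset]; rfl
end
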